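/- arXiv:2401.04016 — 5 statements merged into one kernel-verified Lean document; each statement's English description precedes it below -/
import Mathlib

section
/- For every integer ℓ ≥ 0, every integer m with 0 ≤ m ≤ ℓ, and every complex number w, the associated Legendre function satisfies P_ℓ^m(w) = ((ℓ+m)!/(2^ℓ ℓ!)) · Σ_{k=0}^{ℓ-m} C(ℓ,k)·C(ℓ,m+k)·(w-1)^{ℓ-(m/2+k)}·(w+1)^{m/2+k}, where P_ℓ^m(w) := (1/(2^ℓ ℓ!))·(w²-1)^{m/2}·d^{ℓ+m}/dw^{ℓ+m} (w²-1)^ℓ. In particular, when restricting to real z ≥ 1, writing P_ℓ^m(z) = ((ℓ+m)!/(2^ℓ ℓ!)) · Σ_{k=0}^{ℓ-m} C(ℓ,k)·C(ℓ,m+k)·(z-1)^{ℓ-m/2-k}·(z+1)^{m/2+k} shows P_ℓ^m(z) ≥ 0. -/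
open Complex Finset

open Polynomial in
lemma poly_iteratedDeriv (n : ℕ) (p : ℂ[X]) :
    iteratedDeriv n (fun x => p.eval x) = fun x => (derivative^[n] p).eval x := by
  induction n generalizing p with
  | zero => simp
  | succ n ih =>
    rw [iteratedDeriv_succ']
    have h : deriv (fun x => p.eval x) = fun x => (derivative p).eval x :=
      funext fun x => Polynomial.deriv p
    rw [h, ih, Function.iterate_succ_apply]

open Polynomial in
lemma key_deriv (ℓ m : ℕ) (w : ℂ) :
    iteratedDeriv (ℓ + m) (fun t : ℂ => (t ^ 2 - 1) ^ ℓ) w =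
      ∑ i ∈ range (ℓ + m + 1),
        (((ℓ+m).choose i : ℂ) * (ℓ.descFactorial (ℓ + m - i) : ℂ) * (ℓ.descFactorial i : ℂ) *
          (w - 1) ^ (ℓ - (ℓ + m - i)) * (w + 1) ^ (ℓ - i)) := by
  have hfe : (fun t : ℂ => (t ^ 2 - 1) ^ ℓ)
      = fun t => (((X - C 1) ^ ℓ * (X - C (-1)) ^ ℓ : ℂ[X])).eval t := by
    funext t
    simp only [eval_mul, eval_pow, eval_sub, eval_X, eval_C, ← mul_pow]
    ring_nf
  rw [hfe, poly_iteratedDeriv, iterate_derivative_mul]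
  simp only [iterate_derivative_X_sub_pow, eval_finset_sum, Nat.succ_eq_add_one]
  refine Finset.sum_congr rfl fun i hi => ?_
  simp only [smul_mul_assoc, mul_smul_comm, eval_smul, smul_eq_mul, nsmul_eq_mul,
    eval_mul, eval_pow, eval_sub, eval_X, eval_C, eval_natCast]
  ring

lemma cpow_ne_of_nat_pos {a : ℂ} (m2 : ℕ) (hm : 0 < m2) (h : 2 * a = (m2 : ℂ)) : a ≠ 0 := by
  intro h0
  rw [h0, mul_zero] at h
  have : (m2 : ℂ) = ((0 : ℕ) : ℂ) := by rw [← h]; norm_num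
  exact hm.ne' (by exact_mod_cast this)

lemma L2 (m k : ℕ) (w : ℂ) :
    (w + 1) ^ ((m : ℂ) / 2 + (k : ℂ)) = (w + 1) ^ ((m : ℂ) / 2) * (w + 1) ^ k := by
  rcases eq_or_ne w (-1) with rfl | hw
  · rw [neg_add_cancel]
    rcases Nat.eq_zero_or_pos m with rfl | hm
    · rcases Nat.eq_zero_or_pos k with rfl | hk
      · norm_num
      · have hne : ((0:ℕ) : ℂ) / 2 + (k : ℂ) ≠ 0 := by
          intro h
          have : ((k:ℕ):ℂ) = ((0:ℕ):ℂ) := by push_cast at h ⊢; linear_combination h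
          exact hk.ne' (by exact_mod_cast this)
        rw [zero_cpow hne, zero_pow hk.ne']
        norm_num
    · have h1 : ((m : ℂ) / 2 + (k : ℂ)) ≠ 0 :=
        cpow_ne_of_nat_pos (m + 2 * k) (by omega) (by push_cast; ring)
      have h4 : ((m : ℂ) / 2) ≠ 0 :=
        cpow_ne_of_nat_pos m hm (by push_cast; ring)
      rw [zero_cpow h1, zero_cpow h4, zero_mul]
  · have hb : w + 1 ≠ 0 := fun h => hw (by linear_combination h)
    rw [cpow_add _ _ hb, cpow_natCast]

lemma L1 (ℓ m k : ℕ) (hk : m + k ≤ ℓ) (w : ℂ) :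
    (w - 1) ^ ((ℓ : ℂ) - ((m : ℂ) / 2 + (k : ℂ)))
      = (w - 1) ^ ((m : ℂ) / 2) * (w - 1) ^ (ℓ - m - k) := by
  rcases eq_or_ne w 1 with rfl | hw
  · rw [sub_self]
    rcases Nat.eq_zero_or_pos m with rfl | hm
    · rcases eq_or_ne k ℓ with rfl | hkl
      · norm_num
      · have hlt : k < ℓ := lt_of_le_of_ne (by omega) hkl
        have h1 : ((ℓ : ℂ) - ((0 : ℕ) / 2 + (k : ℂ))) ≠ 0 := by
          intro h
          have : ((ℓ : ℕ) : ℂ) = ((k : ℕ) : ℂ) := by push_cast at h ⊢; linear_combination h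
          exact hkl.symm (by exact_mod_cast this)
        rw [zero_cpow h1, zero_pow (by omega : ℓ - 0 - k ≠ 0)]
        norm_num
    · have h1 : ((ℓ : ℂ) - ((m : ℂ) / 2 + (k : ℂ))) ≠ 0 := by
        intro h
        have h2 : ((2 * ℓ : ℕ) : ℂ) = ((m + 2 * k : ℕ) : ℂ) := by
          push_cast; linear_combination 2 * h
        have h3 : 2 * ℓ = m + 2 * k := Nat.cast_inj.mp h2
        omega
      have h4 : ((m : ℂ) / 2) ≠ 0 :=
        cpow_ne_of_nat_pos m hm (by push_cast; ring)
      rw [zero_cpow h1, zero_cpow h4, zero_mul]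
  · have hb : w - 1 ≠ 0 := sub_ne_zero.2 hw
    have he : (ℓ : ℂ) - ((m : ℂ) / 2 + (k : ℂ)) = (m : ℂ) / 2 + ((ℓ - m - k : ℕ) : ℂ) := by
      have : ((ℓ - m - k : ℕ) : ℂ) = (ℓ : ℂ) - (m : ℂ) - (k : ℂ) := by
        push_cast [Nat.cast_sub (by omega : k ≤ ℓ - m), Nat.cast_sub (by omega : m ≤ ℓ)]; ring
      rw [this]; ring
    rw [he, cpow_add _ _ hb, cpow_natCast]

lemma coeff_id (ℓ m k : ℕ) (hk : k ≤ ℓ) :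
    (ℓ + m).choose (ℓ - k) * ℓ.descFactorial (m + k) * ℓ.descFactorial (ℓ - k)
      = (ℓ + m).factorial * (ℓ.choose k * ℓ.choose (m + k)) := by
  rw [Nat.descFactorial_eq_factorial_mul_choose, Nat.descFactorial_eq_factorial_mul_choose,
    Nat.choose_symm hk]
  have h1 : (ℓ + m).choose (ℓ - k) * (ℓ - k).factorial * (m + k).factorial
      = (ℓ + m).factorial := by
    have := Nat.choose_mul_factorial_mul_factorial (show ℓ - k ≤ ℓ + m by omega)
    rwa [show ℓ + m - (ℓ - k) = m + k by omega] at this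
  calc (ℓ + m).choose (ℓ - k) * ((m + k).factorial * ℓ.choose (m + k)) *
        ((ℓ - k).factorial * ℓ.choose k)
      = ((ℓ + m).choose (ℓ - k) * (ℓ - k).factorial * (m + k).factorial) *
        (ℓ.choose k * ℓ.choose (m + k)) := by ring
    _ = _ := by rw [h1]

/-- Leibniz-expansion of the associated Legendre function `P_ℓ^m` for complex argument,
and nonnegativity of the resulting expression for real `z ≥ 1`. -/
theorem assoc_legendre_expansion (ℓ m : ℕ) (hm : m ≤ ℓ) :
    (∀ w : ℂ,
      (1 / (2 ^ ℓ * (Nat.factorial ℓ : ℂ))) *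
        ((w + 1) ^ ((m : ℂ) / 2) * (w - 1) ^ ((m : ℂ) / 2)) *
        iteratedDeriv (ℓ + m) (fun t : ℂ => (t ^ 2 - 1) ^ ℓ) w =
      ((Nat.factorial (ℓ + m) : ℂ) / (2 ^ ℓ * (Nat.factorial ℓ : ℂ))) *
        ∑ k ∈ range (ℓ - m + 1),
          (Nat.choose ℓ k : ℂ) * (Nat.choose ℓ (m + k) : ℂ) *
            (w - 1) ^ ((ℓ : ℂ) - ((m : ℂ) / 2 + (k : ℂ))) *
            (w + 1) ^ ((m : ℂ) / 2 + (k : ℂ))) ∧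
    (∀ z : ℝ, 1 ≤ z →
      0 ≤ ((Nat.factorial (ℓ + m) : ℝ) / (2 ^ ℓ * (Nat.factorial ℓ : ℝ))) *
        ∑ k ∈ range (ℓ - m + 1),
          (Nat.choose ℓ k : ℝ) * (Nat.choose ℓ (m + k) : ℝ) *
            (z - 1) ^ ((ℓ : ℝ) - (m : ℝ) / 2 - (k : ℝ)) *
            (z + 1) ^ ((m : ℝ) / 2 + (k : ℝ))) := by
  constructor
  · intro w
    rw [key_deriv ℓ m w]
    set G : ℕ → ℂ := fun i => ((ℓ+m).choose i : ℂ) * (ℓ.descFactorial (ℓ+m-i) : ℂ) *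
      (ℓ.descFactorial i : ℂ) * (w-1)^(ℓ-(ℓ+m-i)) * (w+1)^(ℓ-i) with hG
    have hA : ∑ i ∈ range (ℓ+m+1), G i = ∑ i ∈ range (ℓ+1), G i := by
      refine (Finset.sum_subset (Finset.range_subset_range.2 (by omega)) fun i hi hni => ?_).symm
      simp only [mem_range] at hi hni
      simp [hG, Nat.descFactorial_eq_zero_iff_lt.2 (show ℓ < i by omega)]
    have hB : ∑ i ∈ range (ℓ+1), G i = ∑ k ∈ range (ℓ+1), G (ℓ - k) := by
      rw [← Finset.sum_range_reflect]
      simp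
    set F : ℕ → ℂ := fun k => (Nat.choose ℓ k : ℂ) * (Nat.choose ℓ (m + k) : ℂ) *
      (w - 1) ^ ((ℓ : ℂ) - ((m : ℂ) / 2 + (k : ℂ))) *
      (w + 1) ^ ((m : ℂ) / 2 + (k : ℂ)) with hF
    have hC : ∑ k ∈ range (ℓ - m + 1), F k = ∑ k ∈ range (ℓ+1), F k := by
      refine Finset.sum_subset (Finset.range_subset_range.2 (by omega)) fun k hk hnk => ?_
      simp only [mem_range] at hk hnk
      simp [hF, Nat.choose_eq_zero_of_lt (show ℓ < m + k by omega)]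
    rw [hA, hB, hC, Finset.mul_sum, Finset.mul_sum]
    refine Finset.sum_congr rfl fun k hk => ?_
    simp only [mem_range] at hk
    have hkl : k ≤ ℓ := by omega
    simp only [hG, hF]
    rw [show ℓ + m - (ℓ - k) = m + k by omega, show ℓ - (ℓ - k) = k by omega]
    rcases le_or_gt (m + k) ℓ with hmk | hmk
    · rw [L1 ℓ m k hmk w, L2 m k w]
      have hcC : ((ℓ+m).choose (ℓ-k) : ℂ) * (ℓ.descFactorial (m+k) : ℂ) *
          (ℓ.descFactorial (ℓ-k) : ℂ)
          = ((ℓ+m).factorial : ℂ) * ((ℓ.choose k : ℂ) * (ℓ.choose (m+k) : ℂ)) := by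
        exact_mod_cast coeff_id ℓ m k hkl
      rw [Nat.sub_sub]
      linear_combination ((w-1)^((m:ℂ)/2) * (w+1)^((m:ℂ)/2) * (w-1)^(ℓ-(m+k)) * (w+1)^k /
        (2 ^ ℓ * (Nat.factorial ℓ : ℂ))) * hcC
    · simp [Nat.descFactorial_eq_zero_iff_lt.2 hmk, Nat.choose_eq_zero_of_lt hmk]
  · intro z hz
    apply mul_nonneg (by positivity)
    refine Finset.sum_nonneg fun k hk => ?_
    have h1 : (0:ℝ) ≤ z - 1 := by linarith
    have h2 : (0:ℝ) ≤ z + 1 := by linarith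
    exact mul_nonneg (mul_nonneg (mul_nonneg (by positivity) (by positivity))
      (Real.rpow_nonneg h1 _)) (Real.rpow_nonneg h2 _)
end

section
/- For all integers ℓ ≥ 0, 0 ≤ m ≤ ℓ, and all real z ≥ 1, the following two-sided bound holds: (z-1)^ℓ ≤ √π·(ℓ-m)!·P_ℓ^m(z) / (2^ℓ·Γ(ℓ+1/2)) ≤ (z+1)^ℓ, where P_ℓ^m(z) = ((ℓ+m)!/(2^ℓ ℓ!))·Σ_{k=0}^{ℓ-m} C(ℓ,k)·C(ℓ,m+k)·(z-1)^{ℓ-m/2-k}·(z+1)^{m/2+k}. -/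
open Finset


lemma gammaHalf (n : ℕ) : Real.Gamma ((n : ℝ) + 1/2)
    = Real.sqrt Real.pi * (Nat.factorial (2*n) : ℝ) / (4^n * (Nat.factorial n : ℝ)) := by
  induction n with
  | zero =>
    rw [show ((0:ℕ):ℝ) + 1/2 = 1/2 by norm_num, Real.Gamma_one_half_eq]; simp
  | succ n ih =>
    have h1 : ((n+1 : ℕ) : ℝ) + 1/2 = ((n : ℝ) + 1/2) + 1 := by push_cast; ring
    rw [h1, Real.Gamma_add_one (by positivity), ih]
    have h2 : Nat.factorial (2*(n+1)) = (2*n+2)*(2*n+1)*Nat.factorial (2*n) := by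
      have : 2*(n+1) = (2*n+1)+1 := by ring
      rw [this, Nat.factorial_succ, Nat.factorial_succ]; ring
    rw [h2, Nat.factorial_succ]
    have h4 : (Nat.factorial n : ℝ) ≠ 0 := by positivity
    field_simp
    push_cast; ring

lemma vand (ℓ m : ℕ) (hm : m ≤ ℓ) :
    ∑ k ∈ range (ℓ - m + 1), Nat.choose ℓ k * Nat.choose ℓ (m + k)
      = Nat.choose (2*ℓ) (ℓ + m) := by
  have h1 : Nat.choose (2*ℓ) (ℓ + m) = Nat.choose (2*ℓ) (ℓ - m) := by
    rw [← Nat.choose_symm (by omega : ℓ + m ≤ 2*ℓ)]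
    congr 1; omega
  rw [h1, two_mul, Nat.add_choose_eq, Finset.Nat.sum_antidiagonal_eq_sum_range_succ_mk]
  refine Finset.sum_congr rfl fun k hk => ?_
  simp only [mem_range] at hk
  congr 1
  rw [← Nat.choose_symm (by omega : ℓ - m - k ≤ ℓ)]
  congr 1; omega


/-- Two-sided bound for the associated Legendre function on `[1, ∞)`:
`(z-1)^ℓ ≤ √π (ℓ-m)! P_ℓ^m(z) / (2^ℓ Γ(ℓ+1/2)) ≤ (z+1)^ℓ`. -/
theorem assoc_legendre_two_sided_bound (ℓ m : ℕ) (hm : m ≤ ℓ) (z : ℝ) (hz : 1 ≤ z) :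
    (z - 1) ^ ℓ ≤
      Real.sqrt Real.pi * (Nat.factorial (ℓ - m) : ℝ) *
        (((Nat.factorial (ℓ + m) : ℝ) / (2 ^ ℓ * (Nat.factorial ℓ : ℝ))) *
          ∑ k ∈ range (ℓ - m + 1),
            (Nat.choose ℓ k : ℝ) * (Nat.choose ℓ (m + k) : ℝ) *
              (z - 1) ^ ((ℓ : ℝ) - (m : ℝ) / 2 - (k : ℝ)) *
              (z + 1) ^ ((m : ℝ) / 2 + (k : ℝ))) /
        (2 ^ ℓ * Real.Gamma ((ℓ : ℝ) + 1 / 2)) ∧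
    Real.sqrt Real.pi * (Nat.factorial (ℓ - m) : ℝ) *
        (((Nat.factorial (ℓ + m) : ℝ) / (2 ^ ℓ * (Nat.factorial ℓ : ℝ))) *
          ∑ k ∈ range (ℓ - m + 1),
            (Nat.choose ℓ k : ℝ) * (Nat.choose ℓ (m + k) : ℝ) *
              (z - 1) ^ ((ℓ : ℝ) - (m : ℝ) / 2 - (k : ℝ)) *
              (z + 1) ^ ((m : ℝ) / 2 + (k : ℝ))) /
        (2 ^ ℓ * Real.Gamma ((ℓ : ℝ) + 1 / 2)) ≤ (z + 1) ^ ℓ := by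
  have hA : (0:ℝ) ≤ z - 1 := by linarith
  have hB : (0:ℝ) ≤ z + 1 := by linarith
  have hAB : z - 1 ≤ z + 1 := by linarith
  rcases Nat.eq_zero_or_pos ℓ with h0 | hl
  · subst h0
    interval_cases m
    have hg : Real.Gamma (((0:ℕ):ℝ) + 1/2) = Real.sqrt Real.pi := by
      norm_num [Real.Gamma_one_half_eq]
    have hg2 : Real.Gamma ((2⁻¹:ℝ)) = Real.sqrt Real.pi := by
      rw [show ((2⁻¹:ℝ)) = 1/2 by norm_num, Real.Gamma_one_half_eq]
    have hne : Real.sqrt Real.pi ≠ 0 := by positivity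
    simp [hg, hg2, Nat.factorial, div_self hne]
  -- main case ℓ ≥ 1
  set S := ∑ k ∈ range (ℓ - m + 1),
      (Nat.choose ℓ k : ℝ) * (Nat.choose ℓ (m + k) : ℝ) *
        (z - 1) ^ ((ℓ : ℝ) - (m : ℝ) / 2 - (k : ℝ)) *
        (z + 1) ^ ((m : ℝ) / 2 + (k : ℝ)) with hSdef
  have hlne : ((ℓ:ℝ)) ≠ 0 := by positivity
  have key : ∀ k ∈ range (ℓ - m + 1),
      (z-1)^(ℓ:ℝ) ≤ (z-1) ^ ((ℓ:ℝ) - (m:ℝ)/2 - (k:ℝ)) * (z+1) ^ ((m:ℝ)/2 + (k:ℝ)) ∧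
      (z-1) ^ ((ℓ:ℝ) - (m:ℝ)/2 - (k:ℝ)) * (z+1) ^ ((m:ℝ)/2 + (k:ℝ)) ≤ (z+1)^(ℓ:ℝ) := by
    intro k hk
    simp only [mem_range] at hk
    have hk' : (k:ℝ) ≤ (ℓ:ℝ) - (m:ℝ) := by
      have : k ≤ ℓ - m := by omega
      have := (Nat.cast_le (α := ℝ)).2 this
      rwa [Nat.cast_sub hm] at this
    have hm' : (0:ℝ) ≤ (m:ℝ) := by positivity
    set a := (ℓ:ℝ) - (m:ℝ)/2 - (k:ℝ) with hadef
    set b := (m:ℝ)/2 + (k:ℝ) with hbdef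
    have ha : 0 ≤ a := by rw [hadef]; linarith
    have hb : 0 ≤ b := by rw [hbdef]; positivity
    have hab : a + b = (ℓ:ℝ) := by rw [hadef, hbdef]; ring
    constructor
    · calc (z-1)^(ℓ:ℝ) = (z-1)^a * (z-1)^b := by
            rw [← Real.rpow_add' hA (by rw [hab]; exact hlne), hab]
      _ ≤ (z-1)^a * (z+1)^b :=
            mul_le_mul_of_nonneg_left (Real.rpow_le_rpow hA hAB hb) (Real.rpow_nonneg hA a)
    · calc (z-1)^a * (z+1)^b ≤ (z+1)^a * (z+1)^b :=
            mul_le_mul_of_nonneg_right (Real.rpow_le_rpow hA hAB ha) (Real.rpow_nonneg hB b)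
      _ = (z+1)^(ℓ:ℝ) := by rw [← Real.rpow_add' hB (by rw [hab]; exact hlne), hab]
  have hvand : ∑ k ∈ range (ℓ - m + 1), (Nat.choose ℓ k : ℝ) * (Nat.choose ℓ (m + k) : ℝ)
      = (Nat.choose (2*ℓ) (ℓ+m) : ℝ) := by
    rw [← vand ℓ m hm]; push_cast; rfl
  have hlow : (Nat.choose (2*ℓ) (ℓ+m) : ℝ) * (z-1)^ℓ ≤ S := by
    calc (Nat.choose (2*ℓ) (ℓ+m) : ℝ) * (z-1)^ℓ
        = ∑ k ∈ range (ℓ - m + 1),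
            (Nat.choose ℓ k : ℝ) * (Nat.choose ℓ (m + k) : ℝ) * (z-1)^ℓ := by
          rw [← Finset.sum_mul, hvand]
      _ ≤ S := by
          refine Finset.sum_le_sum fun k hk => ?_
          have h := (key k hk).1
          rw [Real.rpow_natCast] at h
          have hc : (0:ℝ) ≤ (Nat.choose ℓ k : ℝ) * (Nat.choose ℓ (m + k) : ℝ) := by positivity
          calc (Nat.choose ℓ k : ℝ) * (Nat.choose ℓ (m + k) : ℝ) * (z-1)^ℓ
              ≤ (Nat.choose ℓ k : ℝ) * (Nat.choose ℓ (m + k) : ℝ) *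
                ((z-1) ^ ((ℓ:ℝ) - (m:ℝ)/2 - (k:ℝ)) * (z+1) ^ ((m:ℝ)/2 + (k:ℝ))) :=
                mul_le_mul_of_nonneg_left h hc
            _ = _ := by ring
  have hhigh : S ≤ (Nat.choose (2*ℓ) (ℓ+m) : ℝ) * (z+1)^ℓ := by
    calc S ≤ ∑ k ∈ range (ℓ - m + 1),
            (Nat.choose ℓ k : ℝ) * (Nat.choose ℓ (m + k) : ℝ) * (z+1)^ℓ := by
          refine Finset.sum_le_sum fun k hk => ?_
          have h := (key k hk).2
          rw [Real.rpow_natCast] at h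
          have hc : (0:ℝ) ≤ (Nat.choose ℓ k : ℝ) * (Nat.choose ℓ (m + k) : ℝ) := by positivity
          calc (Nat.choose ℓ k : ℝ) * (Nat.choose ℓ (m + k) : ℝ) *
                (z-1) ^ ((ℓ:ℝ) - (m:ℝ)/2 - (k:ℝ)) * (z+1) ^ ((m:ℝ)/2 + (k:ℝ))
              = (Nat.choose ℓ k : ℝ) * (Nat.choose ℓ (m + k) : ℝ) *
                ((z-1) ^ ((ℓ:ℝ) - (m:ℝ)/2 - (k:ℝ)) * (z+1) ^ ((m:ℝ)/2 + (k:ℝ))) := by ring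
            _ ≤ _ := mul_le_mul_of_nonneg_left h hc
      _ = (Nat.choose (2*ℓ) (ℓ+m) : ℝ) * (z+1)^ℓ := by rw [← Finset.sum_mul, hvand]
  -- rewrite the big expression
  have hE : Real.sqrt Real.pi * (Nat.factorial (ℓ - m) : ℝ) *
        (((Nat.factorial (ℓ + m) : ℝ) / (2 ^ ℓ * (Nat.factorial ℓ : ℝ))) * S) /
        (2 ^ ℓ * Real.Gamma ((ℓ : ℝ) + 1 / 2))
      = ((Nat.factorial (ℓ - m) : ℝ) * (Nat.factorial (ℓ + m) : ℝ) /
          (Nat.factorial (2*ℓ) : ℝ)) * S := by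
    rw [gammaHalf ℓ]
    have h1 : (0:ℝ) < Real.sqrt Real.pi := Real.sqrt_pos.2 Real.pi_pos
    have h2 : (0:ℝ) < (Nat.factorial ℓ : ℝ) := by positivity
    have h3 : (0:ℝ) < (Nat.factorial (2*ℓ) : ℝ) := by positivity
    have h4 : ((4:ℝ))^ℓ = 2^ℓ * 2^ℓ := by
      rw [show (4:ℝ) = 2*2 by norm_num, mul_pow]
    rw [h4]
    field_simp
  have hC : ((Nat.factorial (ℓ-m) : ℝ) * (Nat.factorial (ℓ+m) : ℝ) /
        (Nat.factorial (2*ℓ) : ℝ)) * (Nat.choose (2*ℓ) (ℓ+m) : ℝ) = 1 := by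
    have h := Nat.choose_mul_factorial_mul_factorial (show ℓ+m ≤ 2*ℓ by omega)
    have h2 : 2*ℓ - (ℓ+m) = ℓ - m := by omega
    rw [h2] at h
    have h3 : (0:ℝ) < (Nat.factorial (2*ℓ) : ℝ) := by positivity
    rw [div_mul_eq_mul_div, div_eq_one_iff_eq (ne_of_gt h3)]
    exact_mod_cast by linear_combination (h : Nat.choose (2*ℓ) (ℓ+m) * Nat.factorial (ℓ+m) * Nat.factorial (ℓ-m) = Nat.factorial (2*ℓ))
  have hCnn : (0:ℝ) ≤ (Nat.factorial (ℓ-m) : ℝ) * (Nat.factorial (ℓ+m) : ℝ) /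
        (Nat.factorial (2*ℓ) : ℝ) := by positivity
  rw [hE]
  constructor
  · calc (z-1)^ℓ
        = ((Nat.factorial (ℓ-m) : ℝ) * (Nat.factorial (ℓ+m) : ℝ) / (Nat.factorial (2*ℓ) : ℝ)) *
            ((Nat.choose (2*ℓ) (ℓ+m) : ℝ) * (z-1)^ℓ) := by
          rw [← mul_assoc, hC, one_mul]
      _ ≤ _ := mul_le_mul_of_nonneg_left hlow hCnn
  · calc ((Nat.factorial (ℓ-m) : ℝ) * (Nat.factorial (ℓ+m) : ℝ) / (Nat.factorial (2*ℓ) : ℝ)) * S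
        ≤ ((Nat.factorial (ℓ-m) : ℝ) * (Nat.factorial (ℓ+m) : ℝ) / (Nat.factorial (2*ℓ) : ℝ)) *
            ((Nat.choose (2*ℓ) (ℓ+m) : ℝ) * (z+1)^ℓ) := mul_le_mul_of_nonneg_left hhigh hCnn
      _ = (z+1)^ℓ := by rw [← mul_assoc, hC, one_mul]
end

section
/- For every r ≥ 0 and every complex w ∈ ℂ, the series Σ_{ℓ=0}^∞ i^ℓ (2ℓ+1) j_ℓ(r) P_ℓ(w) converges absolutely and equals e^{i r w}, where j_ℓ is the spherical Bessel function and P_ℓ the Legendre polynomial extended to complex argument. -/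
open Finset Complex

/-- The spherical Bessel function of the first kind `j_ℓ`, via its power series
`j_ℓ(x) = 2^ℓ ∑_{k} (-1)^k (ℓ+k)! / (k! (2ℓ+2k+1)!) x^{2k+ℓ}` (so `j_ℓ(0) = δ_{ℓ,0}`). -/
noncomputable def sphericalBessel (ℓ : ℕ) (x : ℝ) : ℝ :=
  2 ^ ℓ * ∑' k : ℕ, (-1 : ℝ) ^ k * (Nat.factorial (ℓ + k) : ℝ) /
    ((Nat.factorial k : ℝ) * (Nat.factorial (2 * ℓ + 2 * k + 1) : ℝ)) * x ^ (2 * k + ℓ)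

/-- The Legendre polynomial of degree `ℓ` for complex argument. -/
noncomputable def legendrePC (ℓ : ℕ) (w : ℂ) : ℂ :=
  (2 : ℂ)⁻¹ ^ ℓ * ∑ k ∈ range (ℓ + 1),
    (Nat.choose ℓ k : ℂ) ^ 2 * (w - 1) ^ (ℓ - k) * (w + 1) ^ k

set_option maxHeartbeats 1000000

section JAaux

/-! ### Auxiliary: summand of the spherical Bessel series -/

noncomputable def fR (r : ℝ) (ℓ k : ℕ) : ℝ :=
  (-1 : ℝ) ^ k * (Nat.factorial (ℓ + k) : ℝ) /
    ((Nat.factorial k : ℝ) * (Nat.factorial (2 * ℓ + 2 * k + 1) : ℝ)) * r ^ (2 * k + ℓ)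

lemma sphericalBessel_eq (ℓ : ℕ) (r : ℝ) :
    sphericalBessel ℓ r = 2 ^ ℓ * ∑' k : ℕ, fR r ℓ k := rfl

lemma fact_key (ℓ k : ℕ) :
    Nat.factorial (ℓ + k) * Nat.factorial ℓ ≤ Nat.factorial (2*ℓ+2*k+1) := by
  calc Nat.factorial (ℓ + k) * Nat.factorial ℓ
      ≤ Nat.factorial (ℓ + k) * Nat.factorial (ℓ + k) :=
        Nat.mul_le_mul_left _ (Nat.factorial_le (by omega))
    _ ≤ Nat.factorial ((ℓ + k) + (ℓ + k)) :=
        Nat.le_of_dvd (Nat.factorial_pos _) (Nat.factorial_mul_factorial_dvd_factorial_add _ _)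
    _ ≤ Nat.factorial (2*ℓ+2*k+1) := Nat.factorial_le (by omega)

lemma fR_abs_le (r : ℝ) (hr : 0 ≤ r) (ℓ k : ℕ) :
    |fR r ℓ k| ≤ (r^ℓ / Nat.factorial ℓ) * ((r^2)^k / Nat.factorial k) := by
  rw [fR, abs_mul, abs_div, abs_mul, _root_.abs_pow, abs_neg, abs_one, one_pow, one_mul]
  rw [_root_.abs_pow, _root_.abs_of_nonneg hr]
  rw [Nat.abs_cast, abs_mul, Nat.abs_cast, Nat.abs_cast]
  have h1 : (0:ℝ) < (Nat.factorial k : ℝ) * (Nat.factorial (2*ℓ+2*k+1) : ℝ) := by positivity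
  have h2 : ((Nat.factorial (ℓ+k) : ℝ)) / ((Nat.factorial k : ℝ) * (Nat.factorial (2*ℓ+2*k+1) : ℝ))
      ≤ 1 / ((Nat.factorial ℓ : ℝ) * (Nat.factorial k : ℝ)) := by
    rw [div_le_div_iff₀ h1 (by positivity)]
    have := fact_key ℓ k
    calc (Nat.factorial (ℓ+k) : ℝ) * ((Nat.factorial ℓ : ℝ) * (Nat.factorial k : ℝ))
        = ((Nat.factorial (ℓ+k) * Nat.factorial ℓ : ℕ) : ℝ) * (Nat.factorial k : ℝ) := by
          push_cast; ring
      _ ≤ ((Nat.factorial (2*ℓ+2*k+1) : ℕ) : ℝ) * (Nat.factorial k : ℝ) := by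
          have : ((Nat.factorial (ℓ+k) * Nat.factorial ℓ : ℕ) : ℝ)
              ≤ ((Nat.factorial (2*ℓ+2*k+1) : ℕ) : ℝ) := by exact_mod_cast fact_key ℓ k
          exact mul_le_mul_of_nonneg_right this (by positivity)
      _ = 1 * ((Nat.factorial k : ℝ) * (Nat.factorial (2*ℓ+2*k+1) : ℝ)) := by ring
  calc (Nat.factorial (ℓ+k) : ℝ) / ((Nat.factorial k : ℝ) * (Nat.factorial (2*ℓ+2*k+1) : ℝ))
        * r ^ (2*k+ℓ)
      ≤ (1 / ((Nat.factorial ℓ : ℝ) * (Nat.factorial k : ℝ))) * r ^ (2*k+ℓ) :=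
        mul_le_mul_of_nonneg_right h2 (by positivity)
    _ = (r^ℓ / Nat.factorial ℓ) * ((r^2)^k / Nat.factorial k) := by
        rw [show 2*k+ℓ = ℓ + 2*k from by omega, pow_add, pow_mul]
        field_simp

lemma fR_summable (r : ℝ) (hr : 0 ≤ r) (ℓ : ℕ) : Summable (fR r ℓ) := by
  rw [← summable_abs_iff]
  refine Summable.of_nonneg_of_le (fun k => abs_nonneg _) (fR_abs_le r hr ℓ)
    (((Real.summable_pow_div_factorial (r^2)).mul_left (r^ℓ / Nat.factorial ℓ)))

end JAaux

section LegendreRec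

noncomputable def legT (ℓ : ℕ) (s t : ℂ) : ℂ :=
  ∑ k ∈ range (ℓ + 1), (Nat.choose ℓ k : ℂ) ^ 2 * s ^ (ℓ - k) * t ^ k

noncomputable def shc (f : ℕ → ℂ) : ℕ → ℂ
  | 0 => 0
  | (k+1) => f k

@[simp] lemma shc_zero (f : ℕ → ℂ) : shc f 0 = 0 := rfl
@[simp] lemma shc_succ (f : ℕ → ℂ) (k : ℕ) : shc f (k+1) = f k := rfl

lemma choose_auxQ (L K : ℕ) : (L : ℚ) * (L.choose (K+1))^2 =
    (L.choose K) * (L.choose (K+1)) + (L+2) * ((L.choose K) * (L.choose (K+2)))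
      + (L.choose (K+1)) * (L.choose (K+2)) := by
  rcases le_or_gt (K+2) L with h | h
  · obtain ⟨d, rfl⟩ : ∃ d, L = K + 2 + d := ⟨L - (K+2), by omega⟩
    rw [Nat.cast_choose ℚ (by omega : K ≤ K+2+d), Nat.cast_choose ℚ (by omega : K+1 ≤ K+2+d),
      Nat.cast_choose ℚ (by omega : K+2 ≤ K+2+d)]
    have e1 : K+2+d - K = d + 2 := by omega
    have e2 : K+2+d - (K+1) = d + 1 := by omega
    have e3 : K+2+d - (K+2) = d := by omega
    rw [e1, e2, e3]
    have hK : (Nat.factorial K : ℚ) ≠ 0 := by exact_mod_cast K.factorial_ne_zero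
    have hd : (Nat.factorial d : ℚ) ≠ 0 := by exact_mod_cast d.factorial_ne_zero
    rw [Nat.factorial_succ (K+1), Nat.factorial_succ K, Nat.factorial_succ (d+1),
      Nat.factorial_succ d]
    push_cast
    field_simp
    ring
  · rcases Nat.lt_or_ge L (K+1) with h2 | h2
    · rw [Nat.choose_eq_zero_of_lt h2, Nat.choose_eq_zero_of_lt (show L < K+2 by omega)]
      push_cast; ring
    · have : L = K + 1 := by omega
      subst this
      rw [Nat.choose_eq_zero_of_lt (show K+1 < K+2 by omega)]
      simp [Nat.choose_self]

lemma choose_aux (L K : ℕ) : (L : ℂ) * (L.choose (K+1))^2 =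
    (L.choose K) * (L.choose (K+1)) + (L+2) * ((L.choose K) * (L.choose (K+2)))
      + (L.choose (K+1)) * (L.choose (K+2)) := by
  exact_mod_cast congrArg (fun q : ℚ => (q : ℂ)) (choose_auxQ L K)

lemma coeff_id_s3 (L K : ℕ) :
    (2*(L:ℂ)+3) * (((L+1).choose (K+2):ℂ)^2 + ((L+1).choose (K+1):ℂ)^2)
      + 2*((L:ℂ)+1) * ((L.choose (K+1):ℂ))^2
    = ((L:ℂ)+2) * (((L+2).choose (K+2):ℂ))^2
      + ((L:ℂ)+1) * (((L.choose (K+2):ℂ))^2 + ((L.choose K:ℂ))^2) := by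
  have p1 : ((L+1).choose (K+2) : ℂ) = (L.choose (K+1) : ℂ) + (L.choose (K+2) : ℂ) := by
    rw [Nat.choose_succ_succ]; push_cast; ring
  have p2 : ((L+1).choose (K+1) : ℂ) = (L.choose K : ℂ) + (L.choose (K+1) : ℂ) := by
    rw [Nat.choose_succ_succ]; push_cast; ring
  have p3 : ((L+2).choose (K+2) : ℂ)
      = (L.choose K : ℂ) + 2*(L.choose (K+1) : ℂ) + (L.choose (K+2) : ℂ) := by
    show (((L+1)+1).choose (K+2) : ℂ) = _
    rw [Nat.choose_succ_succ ((L:ℕ)+1) (K+1), Nat.choose_succ_succ, Nat.choose_succ_succ]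
    push_cast; ring
  rw [p1, p2, p3]
  linear_combination 2 * choose_aux L K

section rec
variable (L : ℕ) (s t : ℂ)

private noncomputable def P1 : ℕ → ℂ := fun k => ((L+1).choose k : ℂ)^2
private noncomputable def P2 : ℕ → ℂ := fun k => ((L+2).choose k : ℂ)^2
private noncomputable def P0 : ℕ → ℂ := fun k => (L.choose k : ℂ)^2
private noncomputable def X : ℕ → ℂ := fun k => s ^ (L+2-k) * t ^ k

lemma A1 : s * legT (L+1) s t = ∑ k ∈ range (L+3), P1 L k * X L s t k := by
  rw [legT, Finset.mul_sum, Finset.sum_range_succ (n := L+2)]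
  have h0 : P1 L (L+2) = 0 := by
    simp [P1, Nat.choose_eq_zero_of_lt (show L+1 < L+2 by omega)]
  rw [h0, zero_mul, add_zero]
  refine Finset.sum_congr rfl fun k hk => ?_
  have hk' : k ≤ L + 1 := by simpa [Nat.lt_succ_iff] using hk
  have he : L + 2 - k = (L + 1 - k) + 1 := by omega
  simp only [P1, X, he, pow_succ]
  ring

lemma A2 : t * legT (L+1) s t = ∑ k ∈ range (L+3), shc (P1 L) k * X L s t k := by
  rw [legT, Finset.mul_sum, Finset.sum_range_succ' (n := L+2)]
  simp only [shc_succ, shc_zero, zero_mul, add_zero]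
  refine Finset.sum_congr rfl fun k hk => ?_
  have he : L + 2 - (k+1) = L + 1 - k := by omega
  simp only [P1, X, he, pow_succ]
  ring

lemma A3 : legT (L+2) s t = ∑ k ∈ range (L+3), P2 L k * X L s t k := by
  rw [legT]
  exact Finset.sum_congr rfl fun k hk => by simp only [P2, X]; ring

lemma A4 : s^2 * legT L s t = ∑ k ∈ range (L+3), P0 L k * X L s t k := by
  rw [legT, Finset.mul_sum, Finset.sum_range_succ (n := L+2), Finset.sum_range_succ (n := L+1)]
  have h1 : P0 L (L+2) = 0 := by simp [P0, Nat.choose_eq_zero_of_lt (show L < L+2 by omega)]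
  have h2 : P0 L (L+1) = 0 := by simp [P0, Nat.choose_eq_zero_of_lt (show L < L+1 by omega)]
  rw [h1, h2, zero_mul, zero_mul, add_zero, add_zero]
  refine Finset.sum_congr rfl fun k hk => ?_
  have hk' : k ≤ L := by simpa [Nat.lt_succ_iff] using hk
  have he : L + 2 - k = (L - k) + 2 := by omega
  simp only [P0, X, he, pow_add]
  ring

lemma A5 : (s*t) * legT L s t = ∑ k ∈ range (L+3), shc (P0 L) k * X L s t k := by
  rw [legT, Finset.mul_sum, Finset.sum_range_succ' (n := L+2)]
  simp only [shc_succ, shc_zero, zero_mul, add_zero]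
  rw [Finset.sum_range_succ (n := L+1)]
  have h1 : P0 L (L+1) = 0 := by simp [P0, Nat.choose_eq_zero_of_lt (show L < L+1 by omega)]
  rw [h1, zero_mul, add_zero]
  refine Finset.sum_congr rfl fun k hk => ?_
  have hk' : k ≤ L := by simpa [Nat.lt_succ_iff] using hk
  have he : L + 2 - (k+1) = (L - k) + 1 := by omega
  simp only [P0, X, he, pow_succ]
  ring

lemma A6 : t^2 * legT L s t = ∑ k ∈ range (L+3), shc (shc (P0 L)) k * X L s t k := by
  rw [legT, Finset.mul_sum, Finset.sum_range_succ' (n := L+2)]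
  simp only [shc_succ, shc_zero, zero_mul, add_zero]
  rw [Finset.sum_range_succ' (n := L+1)]
  simp only [shc_succ, shc_zero, zero_mul, add_zero]
  refine Finset.sum_congr rfl fun k hk => ?_
  have he : L + 2 - (k+1+1) = L - k := by omega
  simp only [P0, X, he, pow_add]
  ring

lemma legT_rec :
    (2*(L:ℂ)+3) * ((s+t) * legT (L+1) s t)
      = ((L:ℂ)+2) * legT (L+2) s t + ((L:ℂ)+1) * ((t-s)^2 * legT L s t) := by
  have hL : (s+t) * legT (L+1) s t
      = ∑ k ∈ range (L+3), (P1 L k + shc (P1 L) k) * X L s t k := by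
    rw [add_mul, A1, A2, ← Finset.sum_add_distrib]
    exact Finset.sum_congr rfl fun k _ => by ring
  have hR : (t-s)^2 * legT L s t
      = ∑ k ∈ range (L+3), (P0 L k - 2 * shc (P0 L) k + shc (shc (P0 L)) k) * X L s t k := by
    have hexp : (t-s)^2 * legT L s t
        = s^2 * legT L s t - 2*((s*t) * legT L s t) + t^2 * legT L s t := by ring
    rw [hexp, A4, A5, A6, Finset.mul_sum, ← Finset.sum_sub_distrib, ← Finset.sum_add_distrib]
    exact Finset.sum_congr rfl fun k _ => by ring
  rw [hL, hR, A3, Finset.mul_sum, Finset.mul_sum, Finset.mul_sum, ← Finset.sum_add_distrib]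
  refine Finset.sum_congr rfl fun k hk => ?_
  have ci : (2*(L:ℂ)+3) * (P1 L k + shc (P1 L) k)
      = ((L:ℂ)+2) * P2 L k + ((L:ℂ)+1) * (P0 L k - 2 * shc (P0 L) k + shc (shc (P0 L)) k) := by
    match k with
    | 0 => simp [P1, P2, P0]; ring
    | 1 =>
      simp only [P1, P2, P0, shc_succ, shc_zero, Nat.choose_one_right, Nat.choose_zero_right]
      push_cast; ring
    | (K+2) =>
      simp only [P1, P2, P0, shc_succ, shc_zero]
      linear_combination coeff_id_s3 L K
  linear_combination (X L s t k) * ci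

end rec

lemma legendrePC_def' (ℓ : ℕ) (w : ℂ) :
    legendrePC ℓ w = ((2:ℂ)^ℓ)⁻¹ * legT ℓ (w-1) (w+1) := by
  rw [legendrePC, legT, inv_pow]

@[simp] lemma legendrePC_zero (w : ℂ) : legendrePC 0 w = 1 := by simp [legendrePC]

lemma legendrePC_one (w : ℂ) : legendrePC 1 w = w := by
  simp [legendrePC, Finset.sum_range_succ]
  ring

lemma legendrePC_rec (ℓ : ℕ) (w : ℂ) :
    (2*(ℓ:ℂ)+1) * w * legendrePC ℓ w
      = ((ℓ:ℂ)+1) * legendrePC (ℓ+1) w + (ℓ:ℂ) * legendrePC (ℓ-1) w := by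
  match ℓ with
  | 0 => simp [legendrePC_one]
  | (L+1) =>
    have h := legT_rec L (w-1) (w+1)
    rw [show (w-1)+(w+1) = 2*w by ring] at h
    rw [show (w+1)-(w-1) = 2 by ring] at h
    rw [legendrePC_def', legendrePC_def', legendrePC_def']
    have h2 : ((2:ℂ)^(L+2)) ≠ 0 := pow_ne_zero _ two_ne_zero
    apply mul_left_cancel₀ h2
    push_cast
    have i1 : ((2:ℂ)^(L+2)) * ((2:ℂ)^(L+1))⁻¹ = 2 := by
      rw [pow_succ]; field_simp
    have i2 : ((2:ℂ)^(L+2)) * ((2:ℂ)^(L+2))⁻¹ = 1 := mul_inv_cancel₀ h2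
    have i3 : ((2:ℂ)^(L+2)) * ((2:ℂ)^L)⁻¹ = 4 := by
      rw [pow_succ, pow_succ]; field_simp; ring
    linear_combination (2*(L:ℂ)+3)*w*legT (L+1) (w-1) (w+1) * i1
      - ((L:ℂ)+2)*legT (L+2) (w-1) (w+1) * i2
      - ((L:ℂ)+1)*legT L (w-1) (w+1) * i3 + h

end LegendreRec

section Dcoef

noncomputable def E (ℓ k : ℕ) : ℂ :=
  (2*(ℓ:ℂ)+1) * 2^ℓ * (Nat.factorial (ℓ+2*k) : ℂ) * (Nat.factorial (ℓ+k) : ℂ) /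
    ((Nat.factorial k : ℂ) * (Nat.factorial (2*ℓ+2*k+1) : ℂ))

lemma E1 (K : ℕ) : 3 * E 0 (K+1) = E 1 K := by
  rw [E, E]
  simp only [show 0+2*(K+1) = (2*K+1)+1 from by omega, show 1+2*K = (2*K)+1 from by omega,
    show 2*0+2*(K+1)+1 = ((2*K+1)+1)+1 from by omega, show 2*1+2*K+1 = ((2*K+1)+1)+1 from by omega,
    show (0:ℕ)+(K+1) = K+1 from by omega, show (1:ℕ)+K = K+1 from by omega,
    Nat.factorial_succ, Nat.cast_mul]
  rw [← mul_div_assoc]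
  rw [div_eq_div_iff (by norm_cast; positivity) (by norm_cast; positivity)]
  push_cast
  ring

lemma E2 (m : ℕ) : (2*(m:ℂ)+1) * E (m+1) 0 = ((m:ℂ)+1) * E m 0 := by
  rw [E, E]
  simp only [show m+1+2*0 = m+1 from by omega, show m+2*0 = m from by omega,
    show m+1+0 = m+1 from by omega, show m+0 = m from by omega,
    show 2*(m+1)+2*0+1 = ((2*m+1)+1)+1 from by omega, show 2*m+2*0+1 = (2*m)+1 from by omega,
    Nat.factorial_succ, Nat.cast_mul]
  rw [← mul_div_assoc, ← mul_div_assoc]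
  rw [div_eq_div_iff (by norm_cast; positivity) (by norm_cast; positivity)]
  push_cast
  ring

lemma E3 (m K : ℕ) : (2*(m:ℂ)+1) * ((2*(m:ℂ)+5) * E (m+1) (K+1))
    = ((m:ℂ)+1)*(2*(m:ℂ)+5) * E m (K+1) + ((m:ℂ)+2)*(2*(m:ℂ)+1) * E (m+2) K := by
  rw [E, E, E]
  simp only [show m+1+2*(K+1) = ((m+2*K)+1)+1+1 from by omega,
    show m+2*(K+1) = ((m+2*K)+1)+1 from by omega,
    show m+2+2*K = ((m+2*K)+1)+1 from by omega,
    show m+1+(K+1) = ((m+K)+1)+1 from by omega,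
    show m+(K+1) = (m+K)+1 from by omega,
    show m+2+K = ((m+K)+1)+1 from by omega,
    show 2*(m+1)+2*(K+1)+1 = (((((2*m+2*K)+1)+1)+1)+1)+1 from by omega,
    show 2*m+2*(K+1)+1 = (((2*m+2*K)+1)+1)+1 from by omega,
    show 2*(m+2)+2*K+1 = (((((2*m+2*K)+1)+1)+1)+1)+1 from by omega,
    Nat.factorial_succ, Nat.cast_mul]
  rw [← mul_div_assoc, ← mul_div_assoc, ← mul_div_assoc, ← mul_div_assoc]
  rw [div_add_div _ _ (by norm_cast; positivity) (by norm_cast; positivity)]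
  rw [div_eq_div_iff (by norm_cast; positivity) (by norm_cast; positivity)]
  push_cast
  ring

noncomputable def D : ℕ → ℕ → ℂ
  | 0, ℓ => if ℓ = 0 then 1 else 0
  | (n+1), ℓ => (ℓ:ℂ)/(2*(ℓ:ℂ)-1) * D n (ℓ-1) + ((ℓ:ℂ)+1)/(2*(ℓ:ℂ)+3) * D n (ℓ+1)

lemma D_vanish : ∀ n ℓ, n < ℓ → D n ℓ = 0 := by
  intro n
  induction n with
  | zero => intro ℓ h; simp [D]; omega
  | succ n IH =>
    intro ℓ h
    rw [D, IH (ℓ-1) (by omega), IH (ℓ+1) (by omega), mul_zero, mul_zero, add_zero]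

lemma cast21 (ℓ : ℕ) : (2*(ℓ:ℂ)+1) ≠ 0 := by
  have : ((2*ℓ+1 : ℕ) : ℂ) ≠ 0 := Nat.cast_ne_zero.mpr (by omega)
  push_cast at this; exact this

lemma pow_expand (n : ℕ) (w : ℂ) :
    w ^ n = ∑ ℓ ∈ range (n+1), D n ℓ * legendrePC ℓ w := by
  induction n with
  | zero => simp [D]
  | succ n IH =>
    have hw : w^(n+1) = (∑ ℓ ∈ range (n+1), D n ℓ * legendrePC ℓ w) * w := by
      rw [← IH, pow_succ]
    have key : ∀ ℓ : ℕ, D n ℓ * legendrePC ℓ w * w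
        = D n ℓ * (((ℓ:ℂ)+1)/(2*(ℓ:ℂ)+1)) * legendrePC (ℓ+1) w
          + D n ℓ * ((ℓ:ℂ)/(2*(ℓ:ℂ)+1)) * legendrePC (ℓ-1) w := by
      intro ℓ
      have h := legendrePC_rec ℓ w
      have hne := cast21 ℓ
      have hi : (2*(ℓ:ℂ)+1) * (2*(ℓ:ℂ)+1)⁻¹ = 1 := mul_inv_cancel₀ hne
      linear_combination D n ℓ * (2*(ℓ:ℂ)+1)⁻¹ * h - D n ℓ * legendrePC ℓ w * w * hi
    rw [hw, Finset.sum_mul, Finset.sum_congr rfl (fun ℓ _ => key ℓ), Finset.sum_add_distrib]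
    have hD : ∀ ℓ : ℕ, D (n+1) ℓ * legendrePC ℓ w
        = ((ℓ:ℂ)/(2*(ℓ:ℂ)-1) * D n (ℓ-1)) * legendrePC ℓ w
          + (((ℓ:ℂ)+1)/(2*(ℓ:ℂ)+3) * D n (ℓ+1)) * legendrePC ℓ w := by
      intro ℓ; rw [D]; ring
    rw [Finset.sum_congr rfl (fun ℓ _ => hD ℓ), Finset.sum_add_distrib]
    congr 1
    · conv_rhs => rw [Finset.sum_range_succ']
      have h0 : ((0:ℕ):ℂ)/(2*((0:ℕ):ℂ)-1) * D n (0-1) * legendrePC 0 w = 0 := by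
        simp
      rw [h0, add_zero]
      refine Finset.sum_congr rfl fun j _ => ?_
      have hj : (j+1) - 1 = j := rfl
      rw [hj]
      push_cast
      have hne := cast21 j
      have hne' : (2*(j:ℂ)+1) = 2*((j:ℂ)+1)-1 := by ring
      rw [← hne']
      ring
    · conv_lhs => rw [Finset.sum_range_succ']
      conv_rhs => rw [Finset.sum_range_succ, Finset.sum_range_succ]
      rw [D_vanish n (n+1+1) (by omega), D_vanish n (n+1) (by omega)]
      simp only [mul_zero, zero_mul, add_zero, Nat.cast_zero, zero_div, zero_mul]
      refine Finset.sum_congr rfl fun j _ => ?_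
      have hj : (j+1) - 1 = j := rfl
      rw [hj]
      push_cast
      ring

lemma D_spec (n : ℕ) : (∀ ℓ k, n = ℓ + 2*k → D n ℓ = E ℓ k)
    ∧ (∀ ℓ, (∀ k, n ≠ ℓ + 2*k) → D n ℓ = 0) := by
  induction n with
  | zero =>
    constructor
    · intro ℓ k h
      have hℓ : ℓ = 0 := by omega
      have hk : k = 0 := by omega
      subst hℓ; subst hk
      simp [D, E, Nat.factorial]
    · intro ℓ h
      have h0 : ℓ ≠ 0 := by intro h0; exact h 0 (by omega)
      simp [D, h0]
  | succ n IH =>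
    obtain ⟨IH1, IH2⟩ := IH
    constructor
    · intro ℓ k h
      match ℓ, k with
      | 0, 0 => omega
      | 0, K+1 =>
        rw [D, IH1 1 K (by omega)]
        norm_num
        linear_combination (-(E1 K))/3
      | m+1, 0 =>
        rw [D]
        simp only [Nat.add_sub_cancel]
        rw [IH1 m 0 (by omega), D_vanish n (m+1+1) (by omega), mul_zero, add_zero]
        have h6 : (2*(m:ℂ)+1) ≠ 0 := by
          have h := Nat.cast_ne_zero (R := ℂ).mpr (show 2*m+1 ≠ 0 by omega)
          push_cast at h; exact h
        push_cast
        rw [show 2*((m:ℂ)+1)-1 = 2*(m:ℂ)+1 by ring, div_mul_eq_mul_div, div_eq_iff h6]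
        linear_combination (-1 : ℂ) * E2 m
      | m+1, K+1 =>
        rw [D]
        simp only [Nat.add_sub_cancel]
        rw [IH1 m (K+1) (by omega), IH1 (m+2) K (by omega)]
        have h6 : (2*(m:ℂ)+1) ≠ 0 := by
          have h := Nat.cast_ne_zero (R := ℂ).mpr (show 2*m+1 ≠ 0 by omega)
          push_cast at h; exact h
        have h7 : (2*(m:ℂ)+5) ≠ 0 := by
          have h := Nat.cast_ne_zero (R := ℂ).mpr (show 2*m+5 ≠ 0 by omega)
          push_cast at h; exact h
        push_cast
        rw [show 2*((m:ℂ)+1)-1 = 2*(m:ℂ)+1 by ring, show 2*((m:ℂ)+1)+3 = 2*(m:ℂ)+5 by ring,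
          div_mul_eq_mul_div, div_mul_eq_mul_div, div_add_div _ _ h6 h7,
          div_eq_iff (mul_ne_zero h6 h7)]
        linear_combination (-1 : ℂ) * E3 m K
    · intro ℓ h
      match ℓ with
      | 0 =>
        rw [D, IH2 1 (by intro k hk; exact h (k+1) (by omega))]
        simp
      | m+1 =>
        rw [D]
        simp only [Nat.add_sub_cancel]
        rw [IH2 m (by intro k hk; exact h k (by omega)),
          IH2 (m+2) (by intro k hk; exact h (k+1) (by omega)), mul_zero, mul_zero, add_zero]

end Dcoef

section Assembly

noncomputable def FF (r : ℝ) (w : ℂ) (p : ℕ × ℕ) : ℂ :=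
  I^p.1 * (2*(p.1:ℂ)+1) * 2^p.1 * ((fR r p.1 p.2 : ℝ) : ℂ) * legendrePC p.1 w

noncomputable def GG (r : ℝ) (w : ℂ) (q : ℕ × ℕ) : ℂ :=
  (I*(r:ℂ))^q.1 / ((Nat.factorial q.1 : ℕ) : ℂ) * D q.1 q.2 * legendrePC q.2 w

lemma FG_id (r : ℝ) (ℓ k : ℕ) :
    I^ℓ * (2*(ℓ:ℂ)+1) * 2^ℓ * ((fR r ℓ k : ℝ) : ℂ)
      = (I*(r:ℂ))^(ℓ+2*k) / ((Nat.factorial (ℓ+2*k) : ℕ) : ℂ) * E ℓ k := by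
  rw [fR, E]
  have hI : (I:ℂ)^(ℓ+2*k) = I^ℓ * (-1)^k := by
    rw [pow_add, pow_mul, I_sq]
  rw [mul_pow, hI]
  push_cast
  have h1 : ((Nat.factorial (ℓ+2*k) : ℕ) : ℂ) ≠ 0 := Nat.cast_ne_zero.mpr (Nat.factorial_ne_zero _)
  have h2 : ((Nat.factorial k : ℕ) : ℂ) ≠ 0 := Nat.cast_ne_zero.mpr (Nat.factorial_ne_zero _)
  have h3 : ((Nat.factorial (2*ℓ+2*k+1) : ℕ) : ℂ) ≠ 0 := Nat.cast_ne_zero.mpr (Nat.factorial_ne_zero _)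
  field_simp
  ring

lemma poly_le (ℓ : ℕ) : (2*ℓ+1)*(ℓ+1) ≤ 3*4^ℓ := by
  induction ℓ with
  | zero => norm_num
  | succ ℓ IH =>
    have h4 : 4^(ℓ+1) = 4*4^ℓ := by ring
    nlinarith [IH, pow_pos (show 0 < 4 by norm_num) ℓ]

lemma legendrePC_norm_le (ℓ : ℕ) (w : ℂ) :
    ‖legendrePC ℓ w‖ ≤ ((ℓ:ℝ)+1) * (2*(max ‖w-1‖ ‖w+1‖))^ℓ := by
  set M := max ‖w-1‖ ‖w+1‖ with hM
  have hM0 : 0 ≤ M := le_trans (norm_nonneg _) (le_max_left _ _)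
  rw [legendrePC, norm_mul, norm_pow, norm_inv]
  have h2 : ‖(2:ℂ)‖ = 2 := by
    simpa using Complex.abs_ofNat 2
  rw [h2]
  have hterm : ∀ k ∈ range (ℓ+1),
      ‖(Nat.choose ℓ k : ℂ)^2 * (w-1)^(ℓ-k) * (w+1)^k‖ ≤ (4:ℝ)^ℓ * M^ℓ := by
    intro k hk
    have hkℓ : k ≤ ℓ := by simpa [Nat.lt_succ_iff] using hk
    rw [norm_mul, norm_mul, norm_pow, norm_pow, norm_pow]
    have hc : ‖((Nat.choose ℓ k : ℕ) : ℂ)‖ ≤ (2:ℝ)^ℓ := by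
      rw [Complex.norm_natCast]
      have : ℓ.choose k ≤ 2^ℓ := by
        calc ℓ.choose k ≤ ∑ j ∈ range (ℓ+1), ℓ.choose j :=
              Finset.single_le_sum (f := fun j => ℓ.choose j) (fun _ _ => Nat.zero_le _) hk
          _ = 2^ℓ := Nat.sum_range_choose ℓ
      exact_mod_cast this
    have hw1 : ‖w-1‖^(ℓ-k) ≤ M^(ℓ-k) := pow_le_pow_left₀ (norm_nonneg _) (le_max_left _ _) _
    have hw2 : ‖w+1‖^k ≤ M^k := pow_le_pow_left₀ (norm_nonneg _) (le_max_right _ _) _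
    calc ‖((ℓ.choose k : ℕ):ℂ)‖^2 * ‖w-1‖^(ℓ-k) * ‖w+1‖^k
        ≤ ((2:ℝ)^ℓ)^2 * M^(ℓ-k) * M^k := by gcongr
      _ = (4:ℝ)^ℓ * (M^(ℓ-k) * M^k) := by
          have h4 : ((2:ℝ)^ℓ)^2 = 4^ℓ := by
            rw [← pow_mul, mul_comm, pow_mul]; norm_num
          rw [h4]; ring
      _ = (4:ℝ)^ℓ * M^ℓ := by rw [← pow_add, Nat.sub_add_cancel hkℓ]
  have hsum : ‖∑ k ∈ range (ℓ+1), (Nat.choose ℓ k : ℂ)^2 * (w-1)^(ℓ-k) * (w+1)^k‖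
      ≤ ((ℓ:ℝ)+1) * ((4:ℝ)^ℓ * M^ℓ) := by
    calc ‖∑ k ∈ range (ℓ+1), (Nat.choose ℓ k : ℂ)^2 * (w-1)^(ℓ-k) * (w+1)^k‖
        ≤ ∑ k ∈ range (ℓ+1), ‖(Nat.choose ℓ k : ℂ)^2 * (w-1)^(ℓ-k) * (w+1)^k‖ :=
          norm_sum_le _ _
      _ ≤ ∑ k ∈ range (ℓ+1), (4:ℝ)^ℓ * M^ℓ := Finset.sum_le_sum hterm
      _ = ((ℓ:ℝ)+1) * ((4:ℝ)^ℓ * M^ℓ) := by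
          rw [Finset.sum_const, Finset.card_range, nsmul_eq_mul]; push_cast; ring
  calc (2:ℝ)⁻¹^ℓ * ‖∑ k ∈ range (ℓ+1), (Nat.choose ℓ k : ℂ)^2 * (w-1)^(ℓ-k) * (w+1)^k‖
      ≤ (2:ℝ)⁻¹^ℓ * (((ℓ:ℝ)+1) * ((4:ℝ)^ℓ * M^ℓ)) := by
        apply mul_le_mul_of_nonneg_left hsum (by positivity)
    _ = ((ℓ:ℝ)+1) * (2*M)^ℓ := by
        rw [mul_pow]
        rw [show (4:ℝ)^ℓ = 2^ℓ * 2^ℓ from by rw [← mul_pow]; norm_num]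
        have hi : (2:ℝ)⁻¹^ℓ * 2^ℓ = 1 := by rw [← mul_pow]; norm_num
        linear_combination ((ℓ:ℝ)+1) * 2^ℓ * M^ℓ * hi

end Assembly

/-- Generalized Jacobi–Anger / plane-wave expansion with complex argument:
`e^{irw} = ∑_ℓ i^ℓ (2ℓ+1) j_ℓ(r) P_ℓ(w)`, with absolute convergence. -/
theorem jacobi_anger_complex (r : ℝ) (hr : 0 ≤ r) (w : ℂ) :
    Summable (fun ℓ : ℕ =>
      ‖(I ^ ℓ * (2 * (ℓ : ℂ) + 1) * ((sphericalBessel ℓ r : ℝ) : ℂ) * legendrePC ℓ w)‖) ∧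
    HasSum (fun ℓ : ℕ =>
      I ^ ℓ * (2 * (ℓ : ℂ) + 1) * ((sphericalBessel ℓ r : ℝ) : ℂ) * legendrePC ℓ w)
      (Complex.exp (I * (r : ℂ) * w)) := by
  classical
  set M : ℝ := max ‖w-1‖ ‖w+1‖ with hMdef
  have hM0 : 0 ≤ M := le_trans (norm_nonneg _) (le_max_left _ _)
  -- bound on ‖FF‖
  have hFb : ∀ p : ℕ × ℕ, ‖FF r w p‖
      ≤ ((2*(p.1:ℝ)+1) * ((p.1:ℝ)+1) * (4*M*r)^p.1 / (Nat.factorial p.1 : ℝ))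
          * ((r^2)^p.2 / (Nat.factorial p.2 : ℝ)) := by
    rintro ⟨ℓ, k⟩
    rw [FF]
    dsimp only
    rw [norm_mul, norm_mul, norm_mul, norm_mul, norm_pow, norm_pow]
    have hI : ‖(I:ℂ)‖ = 1 := Complex.norm_I
    have h2 : ‖(2:ℂ)‖ = 2 := by simpa using Complex.abs_ofNat 2
    have hc : ‖(2*(ℓ:ℂ)+1)‖ = 2*(ℓ:ℝ)+1 := by
      rw [show (2*(ℓ:ℂ)+1) = ((2*ℓ+1 : ℕ):ℂ) from by push_cast; ring, Complex.norm_natCast]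
      push_cast; ring
    have hf : ‖((fR r ℓ k : ℝ):ℂ)‖ = |fR r ℓ k| := Complex.norm_real _
    rw [hI, h2, hc, hf, one_pow, one_mul]
    have key := mul_le_mul
      (mul_le_mul_of_nonneg_left (fR_abs_le r hr ℓ k) (by positivity : (0:ℝ) ≤ (2*(ℓ:ℝ)+1) * 2^ℓ))
      (legendrePC_norm_le ℓ w) (norm_nonneg _) (by positivity)
    calc (2*(ℓ:ℝ)+1) * 2^ℓ * |fR r ℓ k| * ‖legendrePC ℓ w‖
        ≤ ((2*(ℓ:ℝ)+1) * 2^ℓ * ((r^ℓ / Nat.factorial ℓ) * ((r^2)^k / Nat.factorial k)))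
            * (((ℓ:ℝ)+1) * (2*M)^ℓ) := key
      _ = ((2*(ℓ:ℝ)+1) * ((ℓ:ℝ)+1) * (4*M*r)^ℓ / (Nat.factorial ℓ : ℝ))
            * ((r^2)^k / (Nat.factorial k : ℝ)) := by
          rw [show (4*M*r)^ℓ = 2^ℓ * (2*M)^ℓ * r^ℓ from by
            rw [← mul_pow, ← mul_pow]; ring_nf]
          field_simp
  have hg1 : Summable (fun ℓ : ℕ =>
      (2*(ℓ:ℝ)+1) * ((ℓ:ℝ)+1) * (4*M*r)^ℓ / (Nat.factorial ℓ : ℝ)) := by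
    refine Summable.of_nonneg_of_le (fun ℓ => by positivity) (fun ℓ => ?_)
      ((Real.summable_pow_div_factorial (4*(4*M*r))).mul_left 3)
    have hp := poly_le ℓ
    have hp' : ((2*ℓ+1)*(ℓ+1) : ℝ) ≤ 3*4^ℓ := by exact_mod_cast hp
    rw [show (3:ℝ)*((4*(4*M*r))^ℓ/(Nat.factorial ℓ : ℝ))
        = (3*4^ℓ*(4*M*r)^ℓ)/(Nat.factorial ℓ : ℝ) from by rw [mul_pow]; ring]
    have hfp : (0:ℝ) < (Nat.factorial ℓ : ℝ) := by positivity
    rw [div_le_div_iff₀ hfp hfp]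
    have : (2*(ℓ:ℝ)+1) * ((ℓ:ℝ)+1) * (4*M*r)^ℓ ≤ 3*4^ℓ*(4*M*r)^ℓ := by
      apply mul_le_mul_of_nonneg_right _ (by positivity)
      push_cast at hp' ⊢; linarith
    exact mul_le_mul_of_nonneg_right this (le_of_lt hfp)
  have hB : Summable (fun p : ℕ × ℕ =>
      ((2*(p.1:ℝ)+1) * ((p.1:ℝ)+1) * (4*M*r)^p.1 / (Nat.factorial p.1 : ℝ))
        * ((r^2)^p.2 / (Nat.factorial p.2 : ℝ))) :=
    hg1.mul_of_nonneg (Real.summable_pow_div_factorial (r^2))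
      (fun ℓ => by positivity) (fun k => by positivity)
  have hFnorm : Summable (fun p : ℕ × ℕ => ‖FF r w p‖) :=
    Summable.of_nonneg_of_le (fun p => norm_nonneg _) hFb hB
  have hFsum : Summable (FF r w) := hFnorm.of_norm
  -- bridge to GG
  have he : Function.Injective (fun p : ℕ × ℕ => ((p.1 + 2*p.2, p.1) : ℕ × ℕ)) := by
    intro p q hpq
    have h1 : p.1 + 2*p.2 = q.1 + 2*q.2 := congrArg Prod.fst hpq
    have h2 : p.1 = q.1 := congrArg Prod.snd hpq
    exact Prod.ext h2 (by omega)
  have hGze : ∀ q : ℕ × ℕ,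
      q ∉ Set.range (fun p : ℕ × ℕ => ((p.1 + 2*p.2, p.1) : ℕ × ℕ)) → GG r w q = 0 := by
    intro q hq
    have hpar : ∀ k, q.1 ≠ q.2 + 2*k := by
      intro k hk
      exact hq ⟨(q.2, k), by simp only; rw [← hk]⟩
    rw [GG, (D_spec q.1).2 q.2 hpar, mul_zero, zero_mul]
  have hFG : FF r w = (GG r w) ∘ (fun p : ℕ × ℕ => ((p.1 + 2*p.2, p.1) : ℕ × ℕ)) := by
    funext p
    obtain ⟨ℓ, k⟩ := p
    show FF r w (ℓ, k) = GG r w (ℓ + 2*k, ℓ)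
    rw [FF, GG]
    simp only
    rw [(D_spec (ℓ+2*k)).1 ℓ k rfl]
    exact congrArg (· * legendrePC ℓ w) (FG_id r ℓ k)
  have hGsummable : Summable (GG r w) := by
    refine (he.summable_iff hGze).mp ?_
    rw [← hFG]; exact hFsum
  -- fibers of GG sum to exp series terms
  have hGfiber : ∀ n : ℕ, HasSum (fun ℓ => GG r w (n, ℓ))
      ((I*(r:ℂ)*w)^n / ((Nat.factorial n : ℕ) : ℂ)) := by
    intro n
    have h0 : ∀ ℓ ∉ range (n+1), GG r w (n, ℓ) = 0 := by
      intro ℓ hℓ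
      have : n < ℓ := by simpa [Nat.lt_succ_iff] using hℓ
      rw [GG]
      simp only
      rw [D_vanish n ℓ this, mul_zero, zero_mul]
    have hval : ∑ ℓ ∈ range (n+1), GG r w (n, ℓ)
        = (I*(r:ℂ)*w)^n / ((Nat.factorial n : ℕ) : ℂ) := by
      have : ∑ ℓ ∈ range (n+1), GG r w (n, ℓ)
          = (I*(r:ℂ))^n / ((Nat.factorial n : ℕ) : ℂ)
            * ∑ ℓ ∈ range (n+1), D n ℓ * legendrePC ℓ w := by
        rw [Finset.mul_sum]
        exact Finset.sum_congr rfl fun ℓ _ => by rw [GG]; ring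
      rw [this, ← pow_expand, mul_pow]
      ring
    have : HasSum (fun ℓ => GG r w (n, ℓ)) _ := hasSum_sum_of_ne_finset_zero h0
    rwa [hval] at this
  have hexp : HasSum (fun n : ℕ => (I*(r:ℂ)*w)^n / ((Nat.factorial n : ℕ) : ℂ))
      (Complex.exp (I*(r:ℂ)*w)) := by
    rw [Complex.exp_eq_exp_ℂ]
    exact NormedSpace.expSeries_div_hasSum_exp (I*(r:ℂ)*w)
  have hGsum : HasSum (GG r w) (Complex.exp (I*(r:ℂ)*w)) := by
    have h1 := hGsummable.hasSum
    have h2 := h1.prod_fiberwise hGfiber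
    rwa [h2.unique hexp] at h1
  have hFsumExp : HasSum (FF r w) (Complex.exp (I*(r:ℂ)*w)) := by
    rw [hFG]
    exact (he.hasSum_iff hGze).mpr hGsum
  -- fibers of FF
  have hFfiber : ∀ ℓ : ℕ, HasSum (fun k => FF r w (ℓ, k))
      (I^ℓ * (2*(ℓ:ℂ)+1) * ((sphericalBessel ℓ r : ℝ) : ℂ) * legendrePC ℓ w) := by
    intro ℓ
    have h1 : HasSum (fR r ℓ) (∑' k, fR r ℓ k) := (fR_summable r hr ℓ).hasSum
    have h2 : HasSum (fun k => ((fR r ℓ k : ℝ) : ℂ)) (((∑' k, fR r ℓ k : ℝ) : ℝ) : ℂ) :=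
      Complex.hasSum_ofReal.mpr h1
    have h3 := (h2.mul_left (I^ℓ * (2*(ℓ:ℂ)+1) * 2^ℓ)).mul_right (legendrePC ℓ w)
    convert h3 using 1
    · rfl
    · rfl
    rw [sphericalBessel_eq]
    push_cast
    ring
  refine ⟨?_, hFsumExp.prod_fiberwise hFfiber⟩
  have hnormfiber : Summable (fun ℓ => ∑' k, ‖FF r w (ℓ, k)‖) :=
    ((summable_prod_of_nonneg (fun p => norm_nonneg _)).mp hFnorm).2
  refine Summable.of_nonneg_of_le (fun ℓ => norm_nonneg _) (fun ℓ => ?_) hnormfiber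
  rw [← (hFfiber ℓ).tsum_eq]
  exact norm_tsum_le_tsum_norm (hFnorm.prod_factor ℓ)
end

section
/- As ℓ → ∞, the squared L²(B₁)-norm of the spherical-wave radial factor satisfies ∫₀¹ j_ℓ(κr)² r² dr ~ (1/16)·(eκ/2)^{2ℓ}·ℓ^{-2(ℓ+3/2)}, where j_ℓ is the spherical Bessel function and κ > 0 is fixed. -/
open Filter

open Real in
lemma SBcoef_bound (ℓ k : ℕ) :
    ((ℓ+k).factorial : ℝ) / ((k.factorial : ℝ) * ((2*ℓ+2*k+1).factorial : ℝ))
      ≤ (ℓ.factorial : ℝ) / ((2*ℓ+1).factorial : ℝ) * (Real.exp 1 / (4*((ℓ:ℝ)+1)))^k := by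
  have hk0 : (0:ℝ) < k.factorial := by exact_mod_cast k.factorial_pos
  have hchoose : (((ℓ+k).choose k : ℝ)) * k.factorial * ℓ.factorial = (ℓ+k).factorial := by
    have := Nat.choose_mul_factorial_mul_factorial (Nat.le_add_left k ℓ)
    rw [Nat.add_sub_cancel] at this
    exact_mod_cast this
  have hcb : ((ℓ+k).choose k : ℝ) ≤ ((ℓ:ℝ)+1)^k * Real.exp 1 ^ k := by
    rcases Nat.eq_zero_or_pos k with hk | hk
    · subst hk; simp
    · calc ((ℓ+k).choose k : ℝ) ≤ ((ℓ+k : ℕ):ℝ)^k / k.factorial :=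
            Nat.choose_le_pow_div k (ℓ+k)
        _ ≤ ((((ℓ:ℝ)+1)) * k)^k / k.factorial := by
            have h0 : (0:ℝ) ≤ ((ℓ+k : ℕ):ℝ) := Nat.cast_nonneg _
            have hbase : ((ℓ+k : ℕ):ℝ) ≤ ((ℓ:ℝ)+1) * k := by
              push_cast
              have h1 : (1:ℝ) ≤ (k:ℝ) := by exact_mod_cast hk
              nlinarith [Nat.cast_nonneg (α := ℝ) ℓ]
            gcongr
        _ = ((ℓ:ℝ)+1)^k * ((k:ℝ)^k / k.factorial) := by rw [mul_pow]; ring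
        _ ≤ ((ℓ:ℝ)+1)^k * Real.exp k := by
            gcongr
            exact Real.pow_div_factorial_le_exp (x := (k:ℝ)) (Nat.cast_nonneg k) k
        _ = ((ℓ:ℝ)+1)^k * Real.exp 1 ^ k := by
            rw [← Real.exp_nat_mul, mul_one]
  have hfac : ((2*ℓ+1).factorial : ℝ) * (4*((ℓ:ℝ)+1)^2)^k ≤ ((2*ℓ+2*k+1).factorial : ℝ) := by
    have h := Nat.factorial_mul_pow_le_factorial (m := 2*ℓ+1) (n := 2*k)
    have e1 : 2*ℓ+1+2*k = 2*ℓ+2*k+1 := by omega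
    rw [e1] at h
    have h' : ((2*ℓ+1).factorial : ℝ) * ((2*ℓ+2 : ℕ):ℝ)^(2*k) ≤ ((2*ℓ+2*k+1).factorial : ℝ) := by
      exact_mod_cast h
    calc ((2*ℓ+1).factorial : ℝ) * (4*((ℓ:ℝ)+1)^2)^k
        = ((2*ℓ+1).factorial : ℝ) * ((2*ℓ+2 : ℕ):ℝ)^(2*k) := by
          rw [pow_mul]; push_cast; ring_nf
      _ ≤ _ := h'
  have hFpos : (0:ℝ) < ((2*ℓ+2*k+1).factorial : ℝ) := by exact_mod_cast (2*ℓ+2*k+1).factorial_pos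
  have hdpos : (0:ℝ) < ((2*ℓ+1).factorial : ℝ) * (4*((ℓ:ℝ)+1)^2)^k := by positivity
  calc ((ℓ+k).factorial : ℝ) / ((k.factorial : ℝ) * ((2*ℓ+2*k+1).factorial : ℝ))
      = ((ℓ+k).choose k : ℝ) * ℓ.factorial / ((2*ℓ+2*k+1).factorial : ℝ) := by
        rw [← hchoose]; field_simp
    _ ≤ (((ℓ:ℝ)+1)^k * Real.exp 1 ^ k) * ℓ.factorial /
          (((2*ℓ+1).factorial : ℝ) * (4*((ℓ:ℝ)+1)^2)^k) := by
        apply div_le_div₀ (by positivity) _ hdpos hfac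
        have h0 : (0:ℝ) ≤ (ℓ.factorial : ℝ) := by positivity
        exact mul_le_mul_of_nonneg_right hcb h0
    _ = (ℓ.factorial : ℝ) / ((2*ℓ+1).factorial : ℝ) * (Real.exp 1 / (4*((ℓ:ℝ)+1)))^k := by
        rw [div_pow, show (4*((ℓ:ℝ)+1)^2)^k = (4*((ℓ:ℝ)+1))^k * ((ℓ:ℝ)+1)^k by
          rw [← mul_pow]; ring_nf]
        have hne : ((ℓ:ℝ)+1) ≠ 0 := by positivity
        have hne2 : ((2*ℓ+1).factorial : ℝ) ≠ 0 := by positivity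
        field_simp


open Real in
lemma SBterm_bound {κ : ℝ} (hκ : 0 < κ) (ℓ k : ℕ) {x : ℝ} (hx0 : 0 ≤ x) (hxκ : x ≤ κ) :
    |(-1 : ℝ) ^ k * ((ℓ+k).factorial : ℝ) /
        ((k.factorial : ℝ) * ((2*ℓ+2*k+1).factorial : ℝ)) * x ^ (2*k+ℓ)|
      ≤ ((ℓ.factorial : ℝ) / ((2*ℓ+1).factorial : ℝ)) * x^ℓ
          * (Real.exp 1 * κ^2 / (4*((ℓ:ℝ)+1)))^k := by
  have habs : |(-1 : ℝ) ^ k * ((ℓ+k).factorial : ℝ) /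
      ((k.factorial : ℝ) * ((2*ℓ+2*k+1).factorial : ℝ)) * x ^ (2*k+ℓ)|
      = ((ℓ+k).factorial : ℝ) / ((k.factorial : ℝ) * ((2*ℓ+2*k+1).factorial : ℝ))
          * x ^ (2*k+ℓ) := by
    rw [abs_mul, abs_div, abs_mul, abs_pow, abs_neg, abs_one, one_pow, one_mul]
    rw [abs_of_nonneg (a := x ^ (2*k+ℓ)) (by positivity)]
    rw [abs_of_nonneg (a := ((ℓ+k).factorial : ℝ)) (by positivity),
        abs_of_nonneg (a := ((k.factorial : ℝ) * ((2*ℓ+2*k+1).factorial : ℝ))) (by positivity)]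
  rw [habs, pow_add, pow_mul]
  calc ((ℓ+k).factorial : ℝ) / ((k.factorial : ℝ) * ((2*ℓ+2*k+1).factorial : ℝ))
        * ((x^2)^k * x^ℓ)
      ≤ ((ℓ.factorial : ℝ) / ((2*ℓ+1).factorial : ℝ) * (Real.exp 1 / (4*((ℓ:ℝ)+1)))^k)
        * ((κ^2)^k * x^ℓ) := by
        have h1 : (x^2)^k ≤ (κ^2)^k := by
          gcongr
        have h2 := SBcoef_bound ℓ k
        apply mul_le_mul h2 _ (by positivity) (by positivity)
        exact mul_le_mul_of_nonneg_right h1 (by positivity)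
    _ = ((ℓ.factorial : ℝ) / ((2*ℓ+1).factorial : ℝ)) * x^ℓ
          * (Real.exp 1 * κ^2 / (4*((ℓ:ℝ)+1)))^k := by
        rw [div_pow, div_pow, mul_pow]
        ring

lemma SBapprox {κ : ℝ} (hκ : 0 < κ) {ℓ : ℕ}
    (hq : Real.exp 1 * κ^2 / (4*((ℓ:ℝ)+1)) ≤ 1/2) {x : ℝ} (hx0 : 0 ≤ x) (hxκ : x ≤ κ) :
    |sphericalBessel ℓ x - 2^ℓ * (((ℓ.factorial : ℝ) / ((2*ℓ+1).factorial : ℝ)) * x^ℓ)|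
      ≤ (Real.exp 1 * κ^2 / (2*((ℓ:ℝ)+1))) *
          (2^ℓ * (((ℓ.factorial : ℝ) / ((2*ℓ+1).factorial : ℝ)) * x^ℓ)) := by
  set q : ℝ := Real.exp 1 * κ^2 / (4*((ℓ:ℝ)+1)) with hqdef
  set c0 : ℝ := (ℓ.factorial : ℝ) / ((2*ℓ+1).factorial : ℝ) with hc0
  set f : ℕ → ℝ := fun k => (-1 : ℝ) ^ k * ((ℓ+k).factorial : ℝ) /
      ((k.factorial : ℝ) * ((2*ℓ+2*k+1).factorial : ℝ)) * x ^ (2*k+ℓ) with hfdef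
  have hq0 : 0 ≤ q := by rw [hqdef]; positivity
  have hq1 : q < 1 := lt_of_le_of_lt hq (by norm_num)
  have hbound : ∀ k, |f k| ≤ c0 * x^ℓ * q^k := fun k => SBterm_bound hκ ℓ k hx0 hxκ
  have hgeo : Summable (fun k : ℕ => c0 * x^ℓ * q^k) :=
    (summable_geometric_of_lt_one hq0 hq1).mul_left _
  have hsum : Summable f := by
    apply Summable.of_norm_bounded hgeo
    intro k; rw [Real.norm_eq_abs]; exact hbound k
  have hSB : sphericalBessel ℓ x = 2^ℓ * ∑' k, f k := rfl
  have hf0 : f 0 = c0 * x^ℓ := by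
    simp only [hfdef, hc0, pow_zero, Nat.add_zero, Nat.mul_zero, Nat.factorial_zero]
    push_cast
    ring_nf
  have hsplit : ∑' k, f k = f 0 + ∑' k, f (k+1) := Summable.tsum_eq_zero_add hsum
  have hshift : Summable (fun k => f (k+1)) := (summable_nat_add_iff 1).mpr hsum
  have hshiftnorm : Summable (fun k => ‖f (k+1)‖) := by
    apply Summable.of_nonneg_of_le (fun k => norm_nonneg _)
      (fun k => ?_) ((summable_geometric_of_lt_one hq0 hq1).mul_left (c0 * x^ℓ * q))
    rw [Real.norm_eq_abs]
    calc |f (k+1)| ≤ c0 * x^ℓ * q^(k+1) := hbound (k+1)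
      _ = c0 * x^ℓ * q * q^k := by ring
  have htail : |∑' k, f (k+1)| ≤ c0 * x^ℓ * q * (1-q)⁻¹ := by
    calc |∑' k, f (k+1)| ≤ ∑' k, ‖f (k+1)‖ := by
          rw [← Real.norm_eq_abs]; exact norm_tsum_le_tsum_norm hshiftnorm
      _ ≤ ∑' k, (c0 * x^ℓ * q) * q^k := by
          apply Summable.tsum_le_tsum _ hshiftnorm ((summable_geometric_of_lt_one hq0 hq1).mul_left _)
          intro k
          rw [Real.norm_eq_abs]
          calc |f (k+1)| ≤ c0 * x^ℓ * q^(k+1) := hbound (k+1)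
            _ = c0 * x^ℓ * q * q^k := by ring
      _ = c0 * x^ℓ * q * (1-q)⁻¹ := by
          rw [tsum_mul_left, tsum_geometric_of_lt_one hq0 hq1]
  have hinv : (1-q)⁻¹ ≤ 2 := by
    rw [show (2:ℝ) = (1/2 : ℝ)⁻¹ by norm_num]
    apply inv_anti₀ (by norm_num) (by linarith)
  have hc0pos : 0 ≤ c0 * x^ℓ := by positivity
  calc |sphericalBessel ℓ x - 2^ℓ * (c0 * x^ℓ)|
      = 2^ℓ * |∑' k, f (k+1)| := by
        rw [hSB, hsplit, hf0]
        rw [show (2:ℝ)^ℓ * (c0 * x^ℓ + ∑' k, f (k+1)) - 2^ℓ * (c0 * x^ℓ)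
            = 2^ℓ * (∑' k, f (k+1)) by ring]
        rw [abs_mul, abs_of_nonneg (a := (2:ℝ)^ℓ) (by positivity)]
    _ ≤ 2^ℓ * (c0 * x^ℓ * q * (1-q)⁻¹) := by
        apply mul_le_mul_of_nonneg_left htail (by positivity)
    _ ≤ 2^ℓ * (c0 * x^ℓ * q * 2) := by
        have := mul_le_mul_of_nonneg_left hinv (mul_nonneg hc0pos hq0)
        apply mul_le_mul_of_nonneg_left _ (by positivity)
        calc c0 * x^ℓ * q * (1-q)⁻¹ = (c0 * x^ℓ * q) * (1-q)⁻¹ := by ring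
          _ ≤ (c0 * x^ℓ * q) * 2 := by
              apply mul_le_mul_of_nonneg_left hinv (by positivity)
          _ = c0 * x^ℓ * q * 2 := by ring
    _ = (Real.exp 1 * κ^2 / (2*((ℓ:ℝ)+1))) * (2^ℓ * (c0 * x^ℓ)) := by
        rw [hqdef]
        have : ((ℓ:ℝ)+1) ≠ 0 := by positivity
        field_simp
        ring


open Real in
lemma SBspos {n : ℕ} (hn : 1 ≤ n) : 0 < Stirling.stirlingSeq n := by
  rw [Stirling.stirlingSeq]
  apply div_pos (by exact_mod_cast n.factorial_pos)
  exact mul_pos (Real.sqrt_pos.mpr (by positivity)) (pow_pos (by positivity) _)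


open Real in
lemma SBkey {κ : ℝ} (hκ : 0 < κ) {ℓ : ℕ} (hℓ : 1 ≤ ℓ) :
    ((2^ℓ * ((ℓ.factorial : ℝ)/((2*ℓ+1).factorial : ℝ)) * κ^ℓ)^2 / (2*(ℓ:ℝ)+3)) /
      ((1/16) * (Real.exp 1 * κ / 2)^(2*ℓ) * (ℓ:ℝ)^(-(2*((ℓ:ℝ)+3/2))))
    = (Stirling.stirlingSeq ℓ / Stirling.stirlingSeq (2*ℓ))^2 *
        (8 * ((ℓ:ℝ)^3 / ((2*(ℓ:ℝ)+1)^2 * (2*(ℓ:ℝ)+3)))) := by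
  have hℓ0 : (0:ℝ) < (ℓ:ℝ) := by exact_mod_cast hℓ
  have he : (0:ℝ) < Real.exp 1 := Real.exp_pos 1
  set a := Stirling.stirlingSeq ℓ with ha
  set b := Stirling.stirlingSeq (2*ℓ) with hb
  have hapos : 0 < a := SBspos hℓ
  have hbpos : 0 < b := SBspos (by omega)
  have hrpow : (ℓ:ℝ) ^ (-(2*((ℓ:ℝ)+3/2))) = ((ℓ:ℝ)^(2*ℓ+3 : ℕ))⁻¹ := by
    rw [show -(2*((ℓ:ℝ)+3/2)) = -((2*ℓ+3 : ℕ) : ℝ) by push_cast; ring,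
      Real.rpow_neg hℓ0.le, Real.rpow_natCast]
  have hsq1 : (ℓ.factorial : ℝ)^2 = a^2 * (2*(ℓ:ℝ)) * (((ℓ:ℝ)/Real.exp 1)^ℓ)^2 := by
    have hd : (0:ℝ) < Real.sqrt (2*(ℓ:ℝ)) * (((ℓ:ℝ)/Real.exp 1)^ℓ) := by
      apply mul_pos (Real.sqrt_pos.mpr (by positivity)) (pow_pos (by positivity) _)
    have h1 : (ℓ.factorial : ℝ) = a * (Real.sqrt (2*(ℓ:ℝ)) * (((ℓ:ℝ)/Real.exp 1)^ℓ)) := by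
      rw [ha, Stirling.stirlingSeq, div_mul_cancel₀ _ hd.ne']
    rw [h1, mul_pow, mul_pow, Real.sq_sqrt (by positivity)]
    ring
  have hsq2 : ((2*ℓ).factorial : ℝ)^2
      = b^2 * (4*(ℓ:ℝ)) * (((2*(ℓ:ℝ))/Real.exp 1)^(2*ℓ))^2 := by
    have hd : (0:ℝ) < Real.sqrt (2*((2*ℓ:ℕ):ℝ)) * ((((2*ℓ:ℕ):ℝ))/Real.exp 1)^(2*ℓ) := by
      apply mul_pos (Real.sqrt_pos.mpr (by positivity)) (pow_pos (by positivity) _)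
    have h1 : ((2*ℓ).factorial : ℝ)
        = b * (Real.sqrt (2*((2*ℓ:ℕ):ℝ)) * ((((2*ℓ:ℕ):ℝ))/Real.exp 1)^(2*ℓ)) := by
      rw [hb, Stirling.stirlingSeq, div_mul_cancel₀ _ hd.ne']
    rw [h1, mul_pow, mul_pow, Real.sq_sqrt (by positivity)]
    push_cast
    ring
  have hfs : ((2*ℓ+1).factorial : ℝ) = (2*(ℓ:ℝ)+1) * ((2*ℓ).factorial : ℝ) := by
    rw [Nat.factorial_succ]
    push_cast
    ring
  have h21sq : ((2*ℓ+1).factorial : ℝ)^2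
      = (2*(ℓ:ℝ)+1)^2 * (b^2 * (4*(ℓ:ℝ)) * (((2*(ℓ:ℝ))/Real.exp 1)^(2*ℓ))^2) := by
    rw [hfs, mul_pow, hsq2]
  have hX2 : (2^ℓ * ((ℓ.factorial : ℝ)/((2*ℓ+1).factorial : ℝ)) * κ^ℓ)^2
      = (a^2 * (2*(ℓ:ℝ)) * (((ℓ:ℝ)/Real.exp 1)^ℓ)^2) * (2^ℓ*κ^ℓ)^2 /
        ((2*(ℓ:ℝ)+1)^2 * (b^2 * (4*(ℓ:ℝ)) * (((2*(ℓ:ℝ))/Real.exp 1)^(2*ℓ))^2)) := by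
    rw [← hsq1, ← h21sq]
    ring
  rw [hrpow, hX2]
  obtain ⟨E, hE, hEeq⟩ : ∃ E : ℝ, 0 < E ∧ Real.exp 1 = E := ⟨Real.exp 1, Real.exp_pos 1, rfl⟩
  rw [hEeq]
  have hne1 : ((ℓ:ℝ)^(2*ℓ+3 : ℕ)) ≠ 0 := by positivity
  have hne2 : (E * κ / 2)^(2*ℓ) ≠ 0 := by positivity
  have hne3 : (2*(ℓ:ℝ)+1) ≠ 0 := by positivity
  have hne4 : (2*(ℓ:ℝ)+3) ≠ 0 := by positivity
  have hne5 : E ≠ 0 := hE.ne'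
  have hne6 : κ ≠ 0 := hκ.ne'
  have hne7 : b ≠ 0 := hbpos.ne'
  have hne8 : (ℓ:ℝ) ≠ 0 := hℓ0.ne'
  field_simp
  ring_nf
  have h1 : E^(ℓ*2) * E⁻¹^(ℓ*2) = 1 := by rw [← mul_pow, mul_inv_cancel₀ hne5, one_pow]
  have h2 : (2:ℝ)^(ℓ*2) * (1/2)^(ℓ*2) = 1 := by rw [← mul_pow]; norm_num
  linear_combination ((ℓ:ℝ)^3 * (ℓ:ℝ)^(ℓ*4) * κ^(ℓ*2) * 32) * ((-(E⁻¹^(ℓ*2)*2^(ℓ*2))) * h1 +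
    (-(E⁻¹^(ℓ*2)*2^(ℓ*2)*E^(ℓ*2)*E⁻¹^(ℓ*2))) * h2)


open Real in
lemma SBratio_limit :
    Tendsto (fun ℓ : ℕ => (Stirling.stirlingSeq ℓ / Stirling.stirlingSeq (2*ℓ))^2 *
      (8 * ((ℓ:ℝ)^3 / ((2*(ℓ:ℝ)+1)^2 * (2*(ℓ:ℝ)+3))))) atTop (nhds 1) := by
  have hs := Stirling.tendsto_stirlingSeq_sqrt_pi
  have h2 : Tendsto (fun ℓ : ℕ => 2*ℓ) atTop atTop :=
    tendsto_atTop_mono (fun ℓ => by simp only [id_eq]; omega) tendsto_id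
  have hs2 : Tendsto (fun ℓ : ℕ => Stirling.stirlingSeq (2*ℓ)) atTop (nhds (Real.sqrt π)) :=
    hs.comp h2
  have hπ : Real.sqrt π ≠ 0 := ne_of_gt (Real.sqrt_pos.mpr Real.pi_pos)
  have hdiv : Tendsto (fun ℓ : ℕ => Stirling.stirlingSeq ℓ / Stirling.stirlingSeq (2*ℓ))
      atTop (nhds 1) := by
    have := hs.div hs2 hπ; rw [div_self hπ] at this; exact this
  have hsq : Tendsto (fun ℓ : ℕ => (Stirling.stirlingSeq ℓ / Stirling.stirlingSeq (2*ℓ))^2)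
      atTop (nhds 1) := by
    simpa using hdiv.pow 2
  have hhalf1 : Tendsto (fun ℓ : ℕ => (ℓ:ℝ)/(2*(ℓ:ℝ)+1)) atTop (nhds (1/2)) := by
    have hb : Tendsto (fun ℓ : ℕ => 2 + 1/(ℓ:ℝ)) atTop (nhds 2) := by
      simpa using (tendsto_const_nhds (x := (2:ℝ)) (f := atTop)).add
        tendsto_one_div_atTop_nhds_zero_nat
    have h := (tendsto_const_nhds (x := (1:ℝ)) (f := (atTop : Filter ℕ))).div hb two_ne_zero
    apply h.congr'
    filter_upwards [eventually_ge_atTop 1] with ℓ hℓ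
    have hℓ0 : ((ℓ:ℝ)) ≠ 0 := Nat.cast_ne_zero.mpr (by omega)
    simp only [Pi.div_apply]
    field_simp
    try ring
  have hhalf2 : Tendsto (fun ℓ : ℕ => (ℓ:ℝ)/(2*(ℓ:ℝ)+3)) atTop (nhds (1/2)) := by
    have h3 : Tendsto (fun ℓ : ℕ => 3/(ℓ:ℝ)) atTop (nhds 0) :=
      tendsto_const_nhds.div_atTop tendsto_natCast_atTop_atTop
    have hb : Tendsto (fun ℓ : ℕ => 2 + 3/(ℓ:ℝ)) atTop (nhds 2) := by
      simpa using (tendsto_const_nhds (x := (2:ℝ)) (f := (atTop : Filter ℕ))).add h3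
    have h := (tendsto_const_nhds (x := (1:ℝ)) (f := (atTop : Filter ℕ))).div hb two_ne_zero
    apply h.congr'
    filter_upwards [eventually_ge_atTop 1] with ℓ hℓ
    have hℓ0 : ((ℓ:ℝ)) ≠ 0 := Nat.cast_ne_zero.mpr (by omega)
    simp only [Pi.div_apply]
    field_simp
    try ring
  have hcube : Tendsto (fun ℓ : ℕ => (ℓ:ℝ)^3 / ((2*(ℓ:ℝ)+1)^2 * (2*(ℓ:ℝ)+3)))
      atTop (nhds (1/8)) := by
    have heq : ∀ ℓ : ℕ, (ℓ:ℝ)^3 / ((2*(ℓ:ℝ)+1)^2 * (2*(ℓ:ℝ)+3))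
        = ((ℓ:ℝ)/(2*(ℓ:ℝ)+1))^2 * ((ℓ:ℝ)/(2*(ℓ:ℝ)+3)) := by
      intro ℓ
      have h1 : (2*(ℓ:ℝ)+1) ≠ 0 := by positivity
      have h2 : (2*(ℓ:ℝ)+3) ≠ 0 := by positivity
      field_simp
    simp_rw [heq]
    have := (hhalf1.pow 2).mul hhalf2
    convert this using 2
    norm_num
  have := hsq.mul (tendsto_const_nhds (x := (8:ℝ)) (f := (atTop:Filter ℕ)) |>.mul hcube)
  convert this using 2
  norm_num

lemma SBcont {κ : ℝ} (hκ : 0 < κ) {ℓ : ℕ}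
    (hq0 : 0 ≤ Real.exp 1 * κ^2/(4*((ℓ:ℝ)+1)))
    (hq1 : Real.exp 1 * κ^2/(4*((ℓ:ℝ)+1)) < 1)
    (hbnd : ∀ (k : ℕ) (x : ℝ), 0 ≤ x → x ≤ κ →
      |(-1 : ℝ) ^ k * ((ℓ+k).factorial : ℝ) /
        ((k.factorial : ℝ) * ((2*ℓ+2*k+1).factorial : ℝ)) * x ^ (2*k+ℓ)|
      ≤ ((ℓ.factorial : ℝ) / ((2*ℓ+1).factorial : ℝ)) * x^ℓ
          * (Real.exp 1 * κ^2 / (4*((ℓ:ℝ)+1)))^k) :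
    ContinuousOn (fun r : ℝ => sphericalBessel ℓ (κ*r)) (Set.Icc 0 1) := by
  have : (fun r : ℝ => sphericalBessel ℓ (κ*r))
      = fun r => 2^ℓ * ∑' k : ℕ, (-1 : ℝ) ^ k * ((ℓ+k).factorial : ℝ) /
        ((k.factorial : ℝ) * ((2*ℓ+2*k+1).factorial : ℝ)) * (κ*r) ^ (2*k+ℓ) := rfl
  rw [this]
  apply ContinuousOn.mul continuousOn_const
  apply continuousOn_tsum
    (u := fun k => ((ℓ.factorial : ℝ) / ((2*ℓ+1).factorial : ℝ)) * κ^ℓ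
        * (Real.exp 1 * κ^2 / (4*((ℓ:ℝ)+1)))^k)
  · intro k
    apply Continuous.continuousOn
    exact continuous_const.mul ((continuous_const.mul continuous_id).pow _)
  · exact (summable_geometric_of_lt_one hq0 hq1).mul_left _
  · intro k r hr
    rw [Real.norm_eq_abs]
    calc |(-1 : ℝ) ^ k * ((ℓ+k).factorial : ℝ) /
          ((k.factorial : ℝ) * ((2*ℓ+2*k+1).factorial : ℝ)) * (κ*r) ^ (2*k+ℓ)|
        ≤ ((ℓ.factorial : ℝ) / ((2*ℓ+1).factorial : ℝ)) * (κ*r)^ℓ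
          * (Real.exp 1 * κ^2 / (4*((ℓ:ℝ)+1)))^k := by
          exact hbnd k (κ*r) (mul_nonneg hκ.le hr.1)
            (by nlinarith [mul_nonneg hκ.le (sub_nonneg.mpr hr.2)])
      _ ≤ ((ℓ.factorial : ℝ) / ((2*ℓ+1).factorial : ℝ)) * κ^ℓ
          * (Real.exp 1 * κ^2 / (4*((ℓ:ℝ)+1)))^k := by
          have h1 : (κ*r)^ℓ ≤ κ^ℓ :=
            pow_le_pow_left₀ (mul_nonneg hκ.le hr.1)
              (by nlinarith [mul_nonneg hκ.le (sub_nonneg.mpr hr.2)]) ℓ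
          exact mul_le_mul_of_nonneg_right
            (mul_le_mul_of_nonneg_left h1 (by positivity)) (by positivity)

lemma SBint (C d κ : ℝ) (ℓ : ℕ) :
    ∫ r in (0:ℝ)..1, (C * (2^ℓ * d * (κ*r)^ℓ))^2 * r^2
      = C^2 * ((2^ℓ * d * κ^ℓ)^2 / (2*(ℓ:ℝ)+3)) := by
  have heq : ∀ r : ℝ, (C * (2^ℓ * d * (κ*r)^ℓ))^2 * r^2
      = (C^2 * (2^ℓ*d*κ^ℓ)^2) * r^(2*ℓ+2) := by
    intro r
    rw [mul_pow κ r]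
    ring
  rw [intervalIntegral.integral_congr (g := fun r => (C^2*(2^ℓ*d*κ^ℓ)^2) * r^(2*ℓ+2))
    (fun r _ => heq r)]
  rw [intervalIntegral.integral_const_mul, integral_pow]
  rw [one_pow, zero_pow (by omega), sub_zero]
  push_cast
  ring


open Real in
lemma SBmain {κ : ℝ} (hκ : 0 < κ) {ℓ : ℕ} (hℓ1 : 1 ≤ ℓ)
    (hqle : Real.exp 1 * κ^2/(4*((ℓ:ℝ)+1)) ≤ 1/2) :
    (1 - Real.exp 1 * κ^2/(2*((ℓ:ℝ)+1)))^2 *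
        ((2^ℓ * ((ℓ.factorial : ℝ)/((2*ℓ+1).factorial : ℝ)) * κ^ℓ)^2 / (2*(ℓ:ℝ)+3))
      ≤ (∫ r in (0:ℝ)..1, (sphericalBessel ℓ (κ*r))^2 * r^2)
    ∧ (∫ r in (0:ℝ)..1, (sphericalBessel ℓ (κ*r))^2 * r^2)
      ≤ (1 + Real.exp 1 * κ^2/(2*((ℓ:ℝ)+1)))^2 *
        ((2^ℓ * ((ℓ.factorial : ℝ)/((2*ℓ+1).factorial : ℝ)) * κ^ℓ)^2 / (2*(ℓ:ℝ)+3)) := by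
  set c0 : ℝ := (ℓ.factorial : ℝ)/((2*ℓ+1).factorial : ℝ) with hc0
  set δ : ℝ := Real.exp 1 * κ^2/(2*((ℓ:ℝ)+1)) with hδ
  have hq0 : 0 ≤ Real.exp 1 * κ^2/(4*((ℓ:ℝ)+1)) := by positivity
  have hδ0 : 0 ≤ δ := by rw [hδ]; positivity
  have hδ2q : δ = 2 * (Real.exp 1 * κ^2/(4*((ℓ:ℝ)+1))) := by
    rw [hδ]
    have : ((ℓ:ℝ)+1) ≠ 0 := by positivity
    field_simp
    ring
  have hδ1 : δ ≤ 1 := by rw [hδ2q]; linarith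
  have hc0pos : 0 < c0 := by rw [hc0]; positivity
  -- pointwise bounds
  have hpt : ∀ r ∈ Set.Icc (0:ℝ) 1,
      ((1-δ) * (2^ℓ * c0 * (κ*r)^ℓ))^2 ≤ (sphericalBessel ℓ (κ*r))^2
      ∧ (sphericalBessel ℓ (κ*r))^2 ≤ ((1+δ) * (2^ℓ * c0 * (κ*r)^ℓ))^2 := by
    intro r hr
    have hx0 : 0 ≤ κ * r := mul_nonneg hκ.le hr.1
    have hxκ : κ * r ≤ κ := by nlinarith [mul_nonneg hκ.le (sub_nonneg.mpr hr.2)]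
    have happ := SBapprox hκ hqle hx0 hxκ
    rw [← hc0, ← hδ] at happ
    rw [abs_le] at happ
    have hh0 : 0 ≤ 2^ℓ * (c0 * (κ*r)^ℓ) := by positivity
    have hlow : (1-δ) * (2^ℓ * (c0 * (κ*r)^ℓ)) ≤ sphericalBessel ℓ (κ*r) := by
      nlinarith [happ.1]
    have hup : sphericalBessel ℓ (κ*r) ≤ (1+δ) * (2^ℓ * (c0 * (κ*r)^ℓ)) := by
      nlinarith [happ.2]
    have hlow0 : 0 ≤ (1-δ) * (2^ℓ * (c0 * (κ*r)^ℓ)) :=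
      mul_nonneg (by linarith) hh0
    constructor
    · have := pow_le_pow_left₀ hlow0 hlow 2
      calc ((1-δ) * (2^ℓ * c0 * (κ*r)^ℓ))^2
          = ((1-δ) * (2^ℓ * (c0 * (κ*r)^ℓ)))^2 := by ring
        _ ≤ (sphericalBessel ℓ (κ*r))^2 := this
    · have hneg : -((1+δ) * (2^ℓ * (c0 * (κ*r)^ℓ))) ≤ sphericalBessel ℓ (κ*r) := by
        nlinarith [happ.1]
      have := sq_le_sq' hneg hup
      calc (sphericalBessel ℓ (κ*r))^2
          ≤ ((1+δ) * (2^ℓ * (c0 * (κ*r)^ℓ)))^2 := this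
        _ = ((1+δ) * (2^ℓ * c0 * (κ*r)^ℓ))^2 := by ring
  -- integrability
  have hq1 : Real.exp 1 * κ^2/(4*((ℓ:ℝ)+1)) < 1 := lt_of_le_of_lt hqle (by norm_num)
  have hcont : ContinuousOn (fun r : ℝ => sphericalBessel ℓ (κ*r)) (Set.Icc 0 1) :=
    SBcont hκ hq0 hq1 (fun k x hx0 hxκ => SBterm_bound hκ ℓ k hx0 hxκ)
  have hci : IntervalIntegrable (fun r => (sphericalBessel ℓ (κ*r))^2 * r^2)
      MeasureTheory.volume 0 1 := by
    apply ContinuousOn.intervalIntegrable_of_Icc zero_le_one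
    exact (hcont.pow 2).mul (continuous_pow 2).continuousOn
  have hlowint : IntervalIntegrable (fun r => ((1-δ) * (2^ℓ * c0 * (κ*r)^ℓ))^2 * r^2)
      MeasureTheory.volume 0 1 := by
    apply Continuous.intervalIntegrable
    fun_prop
  have hupint : IntervalIntegrable (fun r => ((1+δ) * (2^ℓ * c0 * (κ*r)^ℓ))^2 * r^2)
      MeasureTheory.volume 0 1 := by
    apply Continuous.intervalIntegrable
    fun_prop
  have hmono1 : (∫ r in (0:ℝ)..1, ((1-δ) * (2^ℓ * c0 * (κ*r)^ℓ))^2 * r^2)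
      ≤ ∫ r in (0:ℝ)..1, (sphericalBessel ℓ (κ*r))^2 * r^2 := by
    apply intervalIntegral.integral_mono_on zero_le_one hlowint hci
    intro r hr
    exact mul_le_mul_of_nonneg_right (hpt r hr).1 (by positivity)
  have hmono2 : (∫ r in (0:ℝ)..1, (sphericalBessel ℓ (κ*r))^2 * r^2)
      ≤ ∫ r in (0:ℝ)..1, ((1+δ) * (2^ℓ * c0 * (κ*r)^ℓ))^2 * r^2 := by
    apply intervalIntegral.integral_mono_on zero_le_one hci hupint
    intro r hr
    exact mul_le_mul_of_nonneg_right (hpt r hr).2 (by positivity)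
  rw [SBint (1-δ) c0 κ ℓ] at hmono1
  rw [SBint (1+δ) c0 κ ℓ] at hmono2
  exact ⟨hmono1, hmono2⟩

/-- Asymptotics of the squared `L²(B₁)` norm of the radial factor:
`∫₀¹ j_ℓ(κr)² r² dr ~ (1/16)(eκ/2)^{2ℓ} ℓ^{-2(ℓ+3/2)}` as `ℓ → ∞`. -/
theorem spherical_bessel_L2_asymptotics (κ : ℝ) (hκ : 0 < κ) :
    Tendsto (fun ℓ : ℕ =>
        (∫ r in (0:ℝ)..1, (sphericalBessel ℓ (κ * r)) ^ 2 * r ^ 2) /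
          ((1 / 16) * (Real.exp 1 * κ / 2) ^ (2 * ℓ) *
            (ℓ : ℝ) ^ (-(2 * ((ℓ : ℝ) + 3 / 2)))))
      atTop (nhds 1) := by
  obtain ⟨N, hN⟩ := exists_nat_ge (Real.exp 1 * κ^2)
  have hδlim : Tendsto (fun ℓ : ℕ => Real.exp 1 * κ^2/(2*((ℓ:ℝ)+1))) atTop (nhds 0) := by
    apply Filter.Tendsto.div_atTop tendsto_const_nhds
    apply Filter.Tendsto.const_mul_atTop two_pos
    exact tendsto_atTop_add_const_right _ _ tendsto_natCast_atTop_atTop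
  have hR : Tendsto (fun ℓ : ℕ =>
      ((2^ℓ * ((ℓ.factorial : ℝ)/((2*ℓ+1).factorial : ℝ)) * κ^ℓ)^2 / (2*(ℓ:ℝ)+3)) /
        ((1/16) * (Real.exp 1 * κ / 2)^(2*ℓ) * (ℓ:ℝ)^(-(2*((ℓ:ℝ)+3/2)))))
      atTop (nhds 1) := by
    apply SBratio_limit.congr'
    filter_upwards [eventually_ge_atTop 1] with ℓ hℓ
    exact (SBkey hκ hℓ).symm
  have hlowlim : Tendsto (fun ℓ : ℕ => (1 - Real.exp 1 * κ^2/(2*((ℓ:ℝ)+1)))^2 *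
      (((2^ℓ * ((ℓ.factorial : ℝ)/((2*ℓ+1).factorial : ℝ)) * κ^ℓ)^2 / (2*(ℓ:ℝ)+3)) /
        ((1/16) * (Real.exp 1 * κ / 2)^(2*ℓ) * (ℓ:ℝ)^(-(2*((ℓ:ℝ)+3/2))))))
      atTop (nhds 1) := by
    have := ((tendsto_const_nhds (x := (1:ℝ)) (f := (atTop : Filter ℕ))).sub hδlim).pow 2
      |>.mul hR
    simpa using this
  have huplim : Tendsto (fun ℓ : ℕ => (1 + Real.exp 1 * κ^2/(2*((ℓ:ℝ)+1)))^2 *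
      (((2^ℓ * ((ℓ.factorial : ℝ)/((2*ℓ+1).factorial : ℝ)) * κ^ℓ)^2 / (2*(ℓ:ℝ)+3)) /
        ((1/16) * (Real.exp 1 * κ / 2)^(2*ℓ) * (ℓ:ℝ)^(-(2*((ℓ:ℝ)+3/2))))))
      atTop (nhds 1) := by
    have := ((tendsto_const_nhds (x := (1:ℝ)) (f := (atTop : Filter ℕ))).add hδlim).pow 2
      |>.mul hR
    simpa using this
  apply tendsto_of_tendsto_of_tendsto_of_le_of_le' hlowlim huplim
  · filter_upwards [eventually_ge_atTop (max N 1)] with ℓ hℓ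
    have hℓ1 : 1 ≤ ℓ := le_trans (le_max_right N 1) hℓ
    have hℓN : (N:ℝ) ≤ (ℓ:ℝ) := by exact_mod_cast le_trans (le_max_left N 1) hℓ
    have hℓpos : (0:ℝ) < (ℓ:ℝ) := by exact_mod_cast hℓ1
    have hqle : Real.exp 1 * κ^2/(4*((ℓ:ℝ)+1)) ≤ 1/2 := by
      rw [div_le_iff₀ (by positivity)]
      nlinarith
    have hGpos : 0 < (1/16) * (Real.exp 1 * κ / 2)^(2*ℓ) * (ℓ:ℝ)^(-(2*((ℓ:ℝ)+3/2))) := by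
      have h1 : (0:ℝ) < (Real.exp 1 * κ / 2)^(2*ℓ) := by positivity
      have h2 : (0:ℝ) < (ℓ:ℝ)^(-(2*((ℓ:ℝ)+3/2))) := Real.rpow_pos_of_pos hℓpos _
      positivity
    have h := (SBmain hκ hℓ1 hqle).1
    rw [← mul_div_assoc]
    exact (div_le_div_iff_of_pos_right hGpos).mpr h
  · filter_upwards [eventually_ge_atTop (max N 1)] with ℓ hℓ
    have hℓ1 : 1 ≤ ℓ := le_trans (le_max_right N 1) hℓ
    have hℓN : (N:ℝ) ≤ (ℓ:ℝ) := by exact_mod_cast le_trans (le_max_left N 1) hℓ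
    have hℓpos : (0:ℝ) < (ℓ:ℝ) := by exact_mod_cast hℓ1
    have hqle : Real.exp 1 * κ^2/(4*((ℓ:ℝ)+1)) ≤ 1/2 := by
      rw [div_le_iff₀ (by positivity)]
      nlinarith
    have hGpos : 0 < (1/16) * (Real.exp 1 * κ / 2)^(2*ℓ) * (ℓ:ℝ)^(-(2*((ℓ:ℝ)+3/2))) := by
      have h1 : (0:ℝ) < (Real.exp 1 * κ / 2)^(2*ℓ) := by positivity
      have h2 : (0:ℝ) < (ℓ:ℝ)^(-(2*((ℓ:ℝ)+3/2))) := Real.rpow_pos_of_pos hℓpos _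
      positivity
    have h := (SBmain hκ hℓ1 hqle).2
    rw [← mul_div_assoc]
    exact (div_le_div_iff_of_pos_right hGpos).mpr h
end

section
/- Let 𝓑 be a Hilbert space with orthonormal basis {b_q^n}_{(q,n)∈ℐ}, fix unit vectors d₁,…,d_P ∈ 𝕊², and for μ ∈ ℂ^P define T μ := Σ_{(q,n)∈ℐ} c_q^n β_q⁻¹ b_q^n where c_q^n := (4π i^q/√P)·Σ_{p=1}^P μ_p·conj(Y_q^n(d_p)), with β_q > 0 and Y_q^n spherical harmonics satisfying Σ_{n=-q}^{q} |Y_q^n(d)|² = (2q+1)/(4π) for every d ∈ 𝕊². Fix (ℓ,m) ∈ ℐ and 0 < η ≤ 1. If ‖b_ℓ^m − T μ‖_𝓑 ≤ η, then ‖μ‖_{ℓ²} ≥ (1−η)·β_ℓ/(2√(π(2ℓ+1))). -/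
open scoped BigOperators

/-- Discrete instability of propagative plane waves: if the discrete synthesis
`T μ = ∑_{(q,n)} c_q^n β_q⁻¹ b_q^n`, with
`c_q^n = (4π i^q/√P) ∑_p μ_p conj(Y_q^n(d_p))` and the spherical harmonics satisfying
the addition theorem `∑_n |Y_q^n(d)|² = (2q+1)/(4π)` on the unit sphere, approximates
`b_{ℓ}^{m}` within `η ∈ (0,1]`, then `‖μ‖ ≥ (1-η) β_ℓ / (2√(π(2ℓ+1)))`. -/
theorem ppw_discrete_instability
    {𝓑 : Type*} [NormedAddCommGroup 𝓑] [InnerProductSpace ℂ 𝓑] [CompleteSpace 𝓑]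
    (b : HilbertBasis ((q : ℕ) × Fin (2 * q + 1)) ℂ 𝓑)
    (β : ℕ → ℝ) (hβ : ∀ q, 0 < β q)
    (P : ℕ) (hP : 0 < P)
    (d : Fin P → EuclideanSpace ℝ (Fin 3)) (hd : ∀ p, ‖d p‖ = 1)
    (Yh : (q : ℕ) → Fin (2 * q + 1) → EuclideanSpace ℝ (Fin 3) → ℂ)
    (hadd : ∀ (q : ℕ) (x : EuclideanSpace ℝ (Fin 3)), ‖x‖ = 1 →
      ∑ n : Fin (2 * q + 1), ‖Yh q n x‖ ^ 2 = (2 * (q : ℝ) + 1) / (4 * Real.pi))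
    (μ : EuclideanSpace ℂ (Fin P))
    (i₀ : (q : ℕ) × Fin (2 * q + 1)) (η : ℝ) (hη0 : 0 < η) (hη1 : η ≤ 1)
    (Tμ : 𝓑)
    (hTμ : HasSum (fun i : (q : ℕ) × Fin (2 * q + 1) =>
      ((4 * (Real.pi : ℂ) * Complex.I ^ i.1 / (Real.sqrt P : ℂ) *
          ∑ p : Fin P, μ p * (starRingEnd ℂ) (Yh i.1 i.2 (d p))) * (β i.1 : ℂ)⁻¹) • b i) Tμ)
    (herr : ‖b i₀ - Tμ‖ ≤ η) :
    (1 - η) * β i₀.1 / (2 * Real.sqrt (Real.pi * (2 * (i₀.1 : ℝ) + 1))) ≤ ‖μ‖ := by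
  have hπ : (0:ℝ) < Real.pi := Real.pi_pos
  set q := i₀.1 with hq
  set cf : ((q : ℕ) × Fin (2 * q + 1)) → ℂ := fun i =>
      (4 * (Real.pi : ℂ) * Complex.I ^ i.1 / (Real.sqrt P : ℂ) *
          ∑ p : Fin P, μ p * (starRingEnd ℂ) (Yh i.1 i.2 (d p))) * (β i.1 : ℂ)⁻¹ with hcf
  -- inner product of b i₀ with Tμ is the coefficient cf i₀
  have horth := b.orthonormal
  have hsum : HasSum (fun i => inner ℂ (b i₀) (cf i • b i) : _ → ℂ) (inner ℂ (b i₀) Tμ) :=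
    (innerSL ℂ (b i₀)).hasSum hTμ
  have hfun : (fun i => (inner ℂ (b i₀) (cf i • b i) : ℂ)) =
      fun i => if i = i₀ then cf i₀ else 0 := by
    funext i
    rw [inner_smul_right]
    have hij := orthonormal_iff_ite.mp horth i₀ i
    rcases eq_or_ne i i₀ with h | h
    · subst h; simp [hij, horth.1]
    · simp [hij, h, Ne.symm h]
  rw [hfun] at hsum
  have hcoeff : (inner ℂ (b i₀) Tμ : ℂ) = cf i₀ :=
    (hsum.unique (hasSum_ite_eq i₀ (cf i₀)))
  -- 1 - η ≤ ‖cf i₀‖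
  have hdiff : (inner ℂ (b i₀) (b i₀ - Tμ) : ℂ) = 1 - cf i₀ := by
    rw [inner_sub_right, hcoeff, inner_self_eq_norm_sq_to_K, horth.1 i₀]
    norm_num
  have hb1 : ‖b i₀‖ = 1 := horth.1 i₀
  have h1 : ‖(1 : ℂ) - cf i₀‖ ≤ η := by
    rw [← hdiff]
    calc ‖(inner ℂ (b i₀) (b i₀ - Tμ) : ℂ)‖ ≤ ‖b i₀‖ * ‖b i₀ - Tμ‖ := norm_inner_le_norm _ _
      _ ≤ η := by rw [hb1, one_mul]; exact herr
  have h2 : 1 - η ≤ ‖cf i₀‖ := by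
    have := norm_sub_norm_le (1 : ℂ) (cf i₀)
    simp only [norm_one] at this
    linarith
  -- bound the sum via Cauchy–Schwarz
  set Y : EuclideanSpace ℂ (Fin P) := WithLp.toLp 2 (fun p => Yh q i₀.2 (d p)) with hY
  have hSinner : (∑ p : Fin P, μ p * (starRingEnd ℂ) (Yh q i₀.2 (d p))) = inner ℂ Y μ := by
    rw [PiLp.inner_apply]
    exact Finset.sum_congr rfl fun p _ => by simp [hY, RCLike.inner_apply, mul_comm]
  have hYnorm : ‖Y‖ ≤ Real.sqrt (P * ((2 * (q:ℝ) + 1) / (4 * Real.pi))) := by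
    rw [EuclideanSpace.norm_eq]
    apply Real.sqrt_le_sqrt
    calc ∑ p : Fin P, ‖Y p‖ ^ 2
        ≤ ∑ p : Fin P, (2 * (q:ℝ) + 1) / (4 * Real.pi) := by
          apply Finset.sum_le_sum
          intro p _
          rw [← hadd q (d p) (hd p)]
          exact Finset.single_le_sum (fun n _ => sq_nonneg ‖Yh q n (d p)‖)
            (Finset.mem_univ i₀.2)
      _ = P * ((2 * (q:ℝ) + 1) / (4 * Real.pi)) := by
          rw [Finset.sum_const, Finset.card_univ, Fintype.card_fin, nsmul_eq_mul]
  have hS : ‖(∑ p : Fin P, μ p * (starRingEnd ℂ) (Yh q i₀.2 (d p)))‖ ≤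
      Real.sqrt (P * ((2 * (q:ℝ) + 1) / (4 * Real.pi))) * ‖μ‖ := by
    rw [hSinner]
    exact le_trans (norm_inner_le_norm _ _) (by gcongr)
  -- norm of the prefactor
  have hPpos : (0:ℝ) < Real.sqrt P := Real.sqrt_pos.2 (by exact_mod_cast hP)
  have hApre : ‖(4 * (Real.pi : ℂ) * Complex.I ^ q / (Real.sqrt P : ℂ))‖ =
      4 * Real.pi / Real.sqrt P := by
    rw [norm_div, norm_mul, norm_pow, Complex.norm_I, one_pow, mul_one]
    have h4 : (4 * (Real.pi : ℂ)) = ((4 * Real.pi : ℝ) : ℂ) := by push_cast; ring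
    rw [h4, Complex.norm_real, Complex.norm_real, Real.norm_eq_abs, Real.norm_eq_abs,
      abs_of_pos (by positivity), abs_of_pos hPpos]
  have hβnorm : ‖((β q : ℝ) : ℂ)⁻¹‖ = (β q)⁻¹ := by
    rw [norm_inv, Complex.norm_real, Real.norm_eq_abs, abs_of_pos (hβ q)]
  -- key algebraic simplification
  set s := Real.sqrt (Real.pi * (2 * (q:ℝ) + 1)) with hs
  have hspos : (0:ℝ) < s := Real.sqrt_pos.2 (by positivity)
  have hkey : 4 * Real.pi / Real.sqrt P * Real.sqrt (P * ((2 * (q:ℝ) + 1) / (4 * Real.pi)))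
      = 2 * s := by
    rw [Real.sqrt_mul (by positivity : (0:ℝ) ≤ (P:ℝ))]
    rw [div_mul_eq_mul_div, mul_comm (Real.sqrt P), mul_div_assoc, mul_div_assoc,
      div_self (ne_of_gt hPpos), mul_one]
    have : (2 * (q:ℝ) + 1) / (4 * Real.pi) = (4 * Real.pi)⁻¹ ^ 2 * (4 * (Real.pi * (2 * (q:ℝ) + 1))) := by
      field_simp
    rw [this, Real.sqrt_mul (sq_nonneg _), Real.sqrt_sq (by positivity),
      Real.sqrt_mul (by norm_num : (0:ℝ) ≤ 4),
      show Real.sqrt 4 = 2 by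
        rw [show (4:ℝ) = 2^2 by norm_num]; exact Real.sqrt_sq (by norm_num)]
    rw [hs]; field_simp
  -- bound on ‖cf i₀‖
  have h3 : ‖cf i₀‖ ≤ 2 * s * ‖μ‖ * (β q)⁻¹ := by
    rw [hcf]
    simp only
    rw [norm_mul, norm_mul, hApre, hβnorm]
    have := hS
    calc 4 * Real.pi / Real.sqrt P * ‖∑ p : Fin P, μ p * (starRingEnd ℂ) (Yh q i₀.2 (d p))‖ * (β q)⁻¹
        ≤ 4 * Real.pi / Real.sqrt P * (Real.sqrt (P * ((2 * (q:ℝ) + 1) / (4 * Real.pi))) * ‖μ‖) * (β q)⁻¹ :=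
          mul_le_mul_of_nonneg_right
            (mul_le_mul_of_nonneg_left hS (by positivity)) (inv_nonneg.2 (hβ q).le)
      _ = 2 * s * ‖μ‖ * (β q)⁻¹ := by rw [← mul_assoc, hkey]
  -- conclude
  have h4 : (1 - η) * β q ≤ 2 * s * ‖μ‖ := by
    have hβq := hβ q
    have : 1 - η ≤ 2 * s * ‖μ‖ * (β q)⁻¹ := le_trans h2 h3
    calc (1 - η) * β q ≤ (2 * s * ‖μ‖ * (β q)⁻¹) * β q := by
          exact mul_le_mul_of_nonneg_right this (le_of_lt hβq)
      _ = 2 * s * ‖μ‖ := by field_simp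
  rw [div_le_iff₀ (by positivity : (0:ℝ) < 2 * s)]
  linarith
end
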